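/- arXiv:0911.3381 — 4 statements merged into one kernel-verified Lean document; each statement's English description precedes it below -/
import Mathlib

section
/- Let μ be a partition with m_i parts equal to i for each i ≥ 1. Then the cardinality of HI_spec(μ) equals ∏_{i≥1} c_{i,m_i}. -/
/-- A hook, encoded by its size `s ≥ 1` and its height `h ∈ {0, …, s-1}`. -/
structure Hook where
  size : ℕ
  height : ℕ
  size_pos : 0 < size
  height_lt : height < size

/-- The sign of a hook, `(-1) ^ height`. -/
def Hook.sign (h : Hook) : ℤ := (-1) ^ h.height

/-- A hook permutation of length `l`: a sequence of `l` hooks together with a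
permutation of `{1, …, l}`. -/
structure HookPerm (l : ℕ) where
  hooks : Fin l → Hook
  perm : Equiv.Perm (Fin l)

/-- The size of a hook permutation: the sum of the sizes of its hooks. -/
def HookPerm.size {l : ℕ} (H : HookPerm l) : ℕ := ∑ i, (H.hooks i).size

/-- A hook involution: the permutation is an involution and paired indices carry
equal hooks. -/
def HookPerm.IsInvolution {l : ℕ} (H : HookPerm l) : Prop :=
  H.perm * H.perm = 1 ∧ ∀ i, H.hooks (H.perm i) = H.hooks i

/-- The sign of a hook involution: the product of the signs of the hooks at the
fixed points of the permutation. -/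
def HookPerm.invSign {l : ℕ} (H : HookPerm l) : ℤ :=
  ∏ i ∈ Finset.univ.filter (fun i => H.perm i = i), (H.hooks i).sign

/-- A hook involution is special when every fixed point carries a hook of odd
size and height `0`. -/
def HookPerm.IsSpecial {l : ℕ} (H : HookPerm l) : Prop :=
  ∀ i, H.perm i = i → Odd (H.hooks i).size ∧ (H.hooks i).height = 0

/-- The numbers `c_{i,m}` of the column-sum formula: `0` if `i` is even and `m`
odd, `(m-1)‼ i^{m/2}` if `i` and `m` are even, and
`∑_k C(m, m-2k) (2k-1)‼ i^k` if `i` is odd. -/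
def cim (i m : ℕ) : ℕ :=
  if Even i then
    (if Even m then (m - 1).doubleFactorial * i ^ (m / 2) else 0)
  else
    ∑ k ∈ Finset.range (m / 2 + 1),
      m.choose (m - 2 * k) * (2 * k - 1).doubleFactorial * i ^ k

/-- auxiliary sum -/
def Todd (i n r : ℕ) : ℕ := ∑ j ∈ Finset.range r, n.choose (2*j) * (2*j-1).doubleFactorial * i^j

lemma cim_odd (i m : ℕ) (hi : ¬ Even i) : cim i m = Todd i m (m/2+1) := by
  rw [cim, if_neg hi, Todd]
  refine Finset.sum_congr rfl fun k hk => ?_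
  have h2k : 2*k ≤ m := by
    have := Finset.mem_range.mp hk
    omega
  rw [show m - 2*k = m - (2*k) from rfl, Nat.choose_symm h2k]

lemma Todd_ext (i n r₁ r₂ : ℕ) (h1 : n/2 + 1 ≤ r₁) (h12 : r₁ ≤ r₂) :
    Todd i n r₂ = Todd i n r₁ := by
  rw [Todd, Todd]
  refine (Finset.sum_subset (Finset.range_subset_range.mpr h12) fun j _ hj => ?_).symm
  have hj' : n < 2*j := by
    have := Finset.mem_range.not.mp hj
    omega
  rw [Nat.choose_eq_zero_of_lt hj', zero_mul, zero_mul]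

lemma Todd_step (i m r : ℕ) :
    Todd i (m+2) (r+1) = Todd i (m+1) (r+1) + (m+1) * i * Todd i m r := by
  rw [Todd, Todd, Todd, Finset.sum_range_succ' (n := r), Finset.sum_range_succ' (n := r)]
  have key : ∀ t ∈ Finset.range r,
      (m+2).choose (2*(t+1)) * (2*(t+1)-1).doubleFactorial * i^(t+1)
      = (m+1).choose (2*(t+1)) * (2*(t+1)-1).doubleFactorial * i^(t+1)
        + (m+1) * i * (Nat.choose m (2*t) * (2*t-1).doubleFactorial * i^t) := by
    intro t _
    have hp : (m+2).choose (2*(t+1)) = (m+1).choose (2*t+1) + (m+1).choose (2*t+2) := by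
      have h : 2*(t+1) = (2*t+1)+1 := by ring
      rw [h, Nat.choose_succ_succ]
    have hdf : (2*(t+1)-1).doubleFactorial = (2*t+1) * (2*t-1).doubleFactorial := by
      have h : 2*(t+1)-1 = 2*t+1 := by omega
      rw [h, Nat.doubleFactorial_add_one]
    have hkey : (m+1).choose (2*t+1) * (2*t+1) = (m+1) * Nat.choose m (2*t) := by
      rw [← Nat.add_one_mul_choose_eq]
    calc (m+2).choose (2*(t+1)) * (2*(t+1)-1).doubleFactorial * i^(t+1)
        = ((m+1).choose (2*t+1) + (m+1).choose (2*t+2)) * ((2*t+1) * (2*t-1).doubleFactorial) * i^(t+1) := by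
          rw [hp, hdf]
      _ = (m+1).choose (2*(t+1)) * (2*(t+1)-1).doubleFactorial * i^(t+1)
          + ((m+1).choose (2*t+1) * (2*t+1)) * (2*t-1).doubleFactorial * i^(t+1) := by
          rw [hdf]
          have h : 2*(t+1) = 2*t+2 := by ring
          rw [h]
          ring
      _ = (m+1).choose (2*(t+1)) * (2*(t+1)-1).doubleFactorial * i^(t+1)
          + (m+1) * i * (Nat.choose m (2*t) * (2*t-1).doubleFactorial * i^t) := by
          rw [hkey, pow_succ]
          ring
  rw [Finset.sum_congr rfl key, Finset.sum_add_distrib, Finset.mul_sum]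
  simp only [mul_zero, Nat.zero_sub, pow_zero, Nat.choose_zero_right]
  omega

lemma cim_zero (i : ℕ) : cim i 0 = 1 := by
  rw [cim]
  split
  · simp [Nat.doubleFactorial]
  · simp [Nat.doubleFactorial]

lemma cim_rec (i m : ℕ) :
    cim i (m+1) = (if Odd i then 1 else 0) * cim i m + m * i * cim i (m-1) := by
  by_cases hi : Even i
  · rw [if_neg (by simpa [Nat.not_odd_iff_even] using hi), zero_mul, zero_add]
    obtain _ | k := m
    · rw [cim, if_pos hi, if_neg (by decide)]
      simp
    · simp only [cim, if_pos hi, Nat.add_sub_cancel]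
      by_cases hk : Even k
      · have h2 : Even (k+1+1) := by rcases hk with ⟨c, hc⟩; exact ⟨c+1, by omega⟩
        rw [if_pos h2, if_pos hk]
        have hdiv : (k+1+1)/2 = k/2 + 1 := by omega
        rw [hdiv, Nat.doubleFactorial_add_one, pow_succ]
        ring
      · have h2 : ¬ Even (k+1+1) := by
          rintro ⟨c, hc⟩; exact hk ⟨c-1, by omega⟩
        rw [if_neg h2, if_neg hk, mul_zero]
  · rw [if_pos (Nat.not_even_iff_odd.mp hi), one_mul]
    obtain _ | k := m
    · simp [cim_odd _ _ hi, cim_zero, Todd, Nat.doubleFactorial]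
    · rw [cim_odd _ _ hi, cim_odd _ _ hi, Nat.add_sub_cancel, cim_odd _ _ hi]
      have h1 : (k+1+1)/2 + 1 = (k/2+1)+1 := by omega
      rw [h1, Todd_step]
      congr 1
      exact Todd_ext i (k+1) ((k+1)/2+1) (k/2+2) (le_refl _) (by omega)


section DDdef
variable {α : Type*} [DecidableEq α]

def DD (i : ℕ) (s : Finset α) : Type _ :=
  {p : (α → α) × (α → ℕ) //
    (∀ a ∈ s, p.1 a ∈ s) ∧ (∀ a ∉ s, p.1 a = a) ∧ (∀ a, p.1 (p.1 a) = a) ∧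
    (∀ a, p.2 (p.1 a) = p.2 a) ∧ (∀ a ∈ s, p.2 a < i) ∧ (∀ a ∉ s, p.2 a = 0) ∧
    (∀ a ∈ s, p.1 a = a → Odd i ∧ p.2 a = 0)}

instance DD.finite (i : ℕ) (s : Finset α) : Finite (DD i s) := by
  have : Function.Injective (fun x : DD i s =>
      ((fun c : {c // c ∈ s} => (⟨x.1.1 c.1, x.2.1 c.1 c.2⟩ : {c // c ∈ s})),
       (fun c : {c // c ∈ s} => (⟨x.1.2 c.1, x.2.2.2.2.2.1 c.1 c.2⟩ : Fin i)))) := by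
    intro x y hxy
    obtain ⟨h1, h2⟩ := Prod.mk.injEq .. ▸ hxy
    apply Subtype.ext
    apply Prod.ext <;> funext c
    · by_cases hc : c ∈ s
      · exact congrArg Subtype.val (congrFun h1 ⟨c, hc⟩)
      · rw [x.2.2.1 c hc, y.2.2.1 c hc]
    · by_cases hc : c ∈ s
      · exact congrArg Fin.val (congrFun h2 ⟨c, hc⟩)
      · rw [x.2.2.2.2.2.2.1 c hc, y.2.2.2.2.2.2.1 c hc]
  exact Finite.of_injective _ this

lemma card_DD_empty (i : ℕ) : Nat.card (DD i (∅ : Finset α)) = 1 := by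
  have hne : Nonempty (DD i (∅ : Finset α)) :=
    ⟨⟨(id, fun _ => 0), by simp⟩⟩
  have hsub : Subsingleton (DD i (∅ : Finset α)) := by
    constructor
    intro x y
    apply Subtype.ext
    apply Prod.ext <;> funext c
    · rw [x.2.2.1 c (by simp), y.2.2.1 c (by simp)]
    · rw [x.2.2.2.2.2.2.1 c (by simp), y.2.2.2.2.2.2.1 c (by simp)]
  exact Nat.card_unique

lemma card_DD_fix_odd (i : ℕ) (s : Finset α) {a : α} (ha : a ∈ s) (hodd : Odd i) :
    Nat.card {x : DD i s // x.1.1 a = a} = Nat.card (DD i (s.erase a)) := by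
  refine Nat.card_congr ?_
  refine ⟨fun y => ⟨y.1.1, ?_⟩, fun z => ⟨⟨z.1, ?_⟩, ?_⟩, ?_, ?_⟩
  · obtain ⟨⟨p, c1, c2, c3, c4, c5, c6, c7⟩, hfix⟩ := y
    refine ⟨?_, ?_, c3, c4, ?_, ?_, ?_⟩
    · intro c hc
      obtain ⟨hca, hcs⟩ := Finset.mem_erase.mp hc
      refine Finset.mem_erase.mpr ⟨?_, c1 c hcs⟩
      intro hfa
      exact hca (by rw [← c3 c, hfa, hfix])
    · intro c hc
      by_cases hcs : c ∈ s
      · have : c = a := by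
          by_contra hne
          exact hc (Finset.mem_erase.mpr ⟨hne, hcs⟩)
        rw [this, hfix]
      · exact c2 c hcs
    · intro c hc
      exact c5 c (Finset.mem_of_mem_erase hc)
    · intro c hc
      by_cases hcs : c ∈ s
      · have : c = a := by
          by_contra hne
          exact hc (Finset.mem_erase.mpr ⟨hne, hcs⟩)
        rw [this]
        exact (c7 a ha hfix).2
      · exact c6 c hcs
    · intro c hc
      exact c7 c (Finset.mem_of_mem_erase hc)
  · obtain ⟨p, c1, c2, c3, c4, c5, c6, c7⟩ := z
    have hfa : p.1 a = a := c2 a (by simp)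
    refine ⟨?_, ?_, c3, c4, ?_, ?_, ?_⟩
    · intro c hc
      by_cases hca : c = a
      · rw [hca, hfa]; exact ha
      · exact Finset.mem_of_mem_erase (c1 c (Finset.mem_erase.mpr ⟨hca, hc⟩))
    · intro c hc
      exact c2 c (fun h => hc (Finset.mem_of_mem_erase h))
    · intro c hc
      by_cases hca : c = a
      · rw [hca, c6 a (by simp)]
        exact hodd.pos
      · exact c5 c (Finset.mem_erase.mpr ⟨hca, hc⟩)
    · intro c hc
      exact c6 c (fun h => hc (Finset.mem_of_mem_erase h))
    · intro c hc hcf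
      by_cases hca : c = a
      · rw [hca]
        exact ⟨hodd, c6 a (by simp)⟩
      · exact c7 c (Finset.mem_erase.mpr ⟨hca, hc⟩) hcf
  · exact z.2.2.1 a (by simp)
  · intro y; apply Subtype.ext; apply Subtype.ext; rfl
  · intro z; apply Subtype.ext; rfl
end DDdef

section DDpair
variable {α : Type*} [DecidableEq α]

lemma card_DD_pair (i : ℕ) (s : Finset α) {a b : α} (ha : a ∈ s) (hb : b ∈ s.erase a) :
    Nat.card {x : DD i s // x.1.1 a = b} = i * Nat.card (DD i ((s.erase a).erase b)) := by
  have hba : b ≠ a := (Finset.mem_erase.mp hb).1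
  have hbs : b ∈ s := (Finset.mem_erase.mp hb).2
  set u : Finset α := (s.erase a).erase b with hu
  have memu : ∀ c, c ∈ u ↔ c ≠ b ∧ c ≠ a ∧ c ∈ s := by
    intro c; simp [hu, Finset.mem_erase]
  have key : Nat.card {x : DD i s // x.1.1 a = b} = Nat.card (Fin i × DD i u) := by
    refine Nat.card_congr ⟨
      fun y => (⟨y.1.1.2 a, y.1.2.2.2.2.2.1 a ha⟩,
        ⟨(fun c => if c = a ∨ c = b then c else y.1.1.1 c,
          fun c => if c = a ∨ c = b then 0 else y.1.1.2 c), ?_⟩),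
      fun z => ⟨⟨(fun c => if c = a then b else if c = b then a else z.2.1.1 c,
          fun c => if c = a ∨ c = b then (z.1 : ℕ) else z.2.1.2 c), ?_⟩, ?_⟩, ?_, ?_⟩
    · -- toFun conditions
      obtain ⟨⟨⟨f0, h0⟩, c1, c2, c3, c4, c5, c6, c7⟩, hy⟩ := y
      simp only at hy c1 c2 c3 c4 c5 c6 c7 ⊢
      have hfb : f0 b = a := by rw [← hy, c3]
      refine ⟨?_, ?_, ?_, ?_, ?_, ?_, ?_⟩
      · intro c hc
        obtain ⟨hcb, hca, hcs⟩ := (memu c).mp hc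
        rw [if_neg (by tauto)]
        refine (memu _).mpr ⟨?_, ?_, c1 c hcs⟩
        · intro h; exact hca (by rw [← c3 c, h, hfb])
        · intro h; exact hcb (by rw [← c3 c, h, hy])
      · intro c hc
        by_cases hab : c = a ∨ c = b
        · rw [if_pos hab]
        · rw [if_neg hab]
          exact c2 c (fun hcs => hc ((memu c).mpr ⟨fun h => hab (Or.inr h), fun h => hab (Or.inl h), hcs⟩))
      · intro c
        by_cases hab : c = a ∨ c = b
        · rw [if_pos hab, if_pos hab]
        · rw [if_neg hab]
          by_cases hcs : c ∈ s
          · have h1 : ¬(f0 c = a ∨ f0 c = b) := by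
              rintro (h | h)
              · exact hab (Or.inr (by rw [← c3 c, h, hy]))
              · exact hab (Or.inl (by rw [← c3 c, h, hfb]))
            rw [if_neg h1, c3]
          · rw [c2 c hcs, if_neg hab, c2 c hcs]
      · intro c
        by_cases hab : c = a ∨ c = b
        · rw [if_pos hab]
        · rw [if_neg hab]
          by_cases hcs : c ∈ s
          · have h1 : ¬(f0 c = a ∨ f0 c = b) := by
              rintro (h | h)
              · exact hab (Or.inr (by rw [← c3 c, h, hy]))
              · exact hab (Or.inl (by rw [← c3 c, h, hfb]))
            rw [if_neg h1, if_neg hab, c4]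
          · rw [c2 c hcs, if_neg hab]
      · intro c hc
        obtain ⟨hcb, hca, hcs⟩ := (memu c).mp hc
        rw [if_neg (by tauto)]
        exact c5 c hcs
      · intro c hc
        by_cases hab : c = a ∨ c = b
        · rw [if_pos hab]
        · rw [if_neg hab]
          exact c6 c (fun hcs => hc ((memu c).mpr ⟨fun h => hab (Or.inr h), fun h => hab (Or.inl h), hcs⟩))
      · intro c hc hcf
        obtain ⟨hcb, hca, hcs⟩ := (memu c).mp hc
        rw [if_neg (by tauto)] at hcf
        rw [if_neg (show ¬(c = a ∨ c = b) by tauto)]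
        exact c7 c hcs hcf
    · -- invFun DD conditions
      obtain ⟨v, ⟨⟨g0, e0⟩, d1, d2, d3, d4, d5, d6, d7⟩⟩ := z
      simp only at d1 d2 d3 d4 d5 d6 d7 ⊢
      have hanu : a ∉ u := by rw [memu]; tauto
      have hbnu : b ∉ u := by rw [memu]; tauto
      have hga : g0 a = a := d2 a hanu
      have hgb : g0 b = b := d2 b hbnu
      refine ⟨?_, ?_, ?_, ?_, ?_, ?_, ?_⟩
      · intro c hcs
        by_cases hca : c = a
        · rw [if_pos hca]; exact hbs
        · rw [if_neg hca]
          by_cases hcb : c = b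
          · rw [if_pos hcb]; exact ha
          · rw [if_neg hcb]
            have : c ∈ u := (memu c).mpr ⟨hcb, hca, hcs⟩
            exact ((memu _).mp (d1 c this)).2.2
      · intro c hcs
        have hca : c ≠ a := fun h => hcs (h ▸ ha)
        have hcb : c ≠ b := fun h => hcs (h ▸ hbs)
        rw [if_neg hca, if_neg hcb]
        exact d2 c (fun h => hcs ((memu c).mp h |>.2.2)
)
      · intro c
        by_cases hca : c = a
        · rw [hca, if_pos rfl, if_neg hba, if_pos rfl]
        · rw [if_neg hca]
          by_cases hcb : c = b
          · rw [if_pos hcb, if_pos rfl, hcb]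
          · rw [if_neg hcb]
            by_cases hcu : c ∈ u
            · have hgu := d1 c hcu
              obtain ⟨hgb', hga', _⟩ := (memu _).mp hgu
              rw [if_neg hga', if_neg hgb', d3]
            · rw [d2 c hcu, if_neg hca, if_neg hcb, d2 c hcu]
      · intro c
        by_cases hca : c = a
        · rw [hca, if_pos rfl, if_pos (Or.inr rfl), if_pos (Or.inl rfl)]
        · rw [if_neg hca]
          by_cases hcb : c = b
          · rw [if_pos hcb, if_pos (Or.inl rfl), if_pos (Or.inr hcb)]
          · rw [if_neg hcb]
            by_cases hcu : c ∈ u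
            · have hgu := d1 c hcu
              obtain ⟨hgb', hga', _⟩ := (memu _).mp hgu
              rw [if_neg (by tauto), if_neg (by tauto), d4]
            · rw [d2 c hcu, if_neg (by tauto)]
      · intro c hcs
        by_cases hab : c = a ∨ c = b
        · rw [if_pos hab]; exact v.2
        · rw [if_neg hab]
          exact d5 c ((memu c).mpr ⟨fun h => hab (Or.inr h), fun h => hab (Or.inl h), hcs⟩)
      · intro c hcs
        have hca : c ≠ a := fun h => hcs (h ▸ ha)
        have hcb : c ≠ b := fun h => hcs (h ▸ hbs)
        rw [if_neg (by tauto)]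
        exact d6 c (fun h => hcs ((memu c).mp h |>.2.2))
      · intro c hcs hcf
        by_cases hca : c = a
        · rw [if_pos hca] at hcf; exact absurd (hcf.trans hca) hba
        · rw [if_neg hca] at hcf
          by_cases hcb : c = b
          · rw [if_pos hcb] at hcf; exact absurd (hcf.trans hcb).symm hba
          · rw [if_neg hcb] at hcf
            have hcu : c ∈ u := (memu c).mpr ⟨hcb, hca, hcs⟩
            rw [if_neg (by tauto)]
            exact d7 c hcu hcf
    · -- invFun prop: f a = b
      simp
    · -- left inverse
      rintro ⟨⟨⟨f0, h0⟩, c1, c2, c3, c4, c5, c6, c7⟩, hy⟩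
      simp only at hy c1 c2 c3 c4 c5 c6 c7
      have hfb : f0 b = a := by rw [← hy, c3]
      have hhb : h0 b = h0 a := by rw [← hy, c4]
      apply Subtype.ext
      apply Subtype.ext
      simp only
      refine Prod.ext ?_ ?_ <;> funext c <;> simp only
      · by_cases hca : c = a
        · rw [if_pos hca, hca, hy]
        · rw [if_neg hca]
          by_cases hcb : c = b
          · rw [if_pos hcb, hcb, hfb]
          · rw [if_neg hcb, if_neg (by tauto)]
      · by_cases hca : c = a
        · rw [if_pos (Or.inl hca), hca]
        · by_cases hcb : c = b
          · rw [if_pos (Or.inr hcb), hcb, hhb]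
          · rw [if_neg (by tauto), if_neg (by tauto)]
    · -- right inverse
      rintro ⟨v, ⟨⟨g0, e0⟩, d1, d2, d3, d4, d5, d6, d7⟩⟩
      simp only at d1 d2 d3 d4 d5 d6 d7
      have hanu : a ∉ u := by rw [memu]; tauto
      have hbnu : b ∉ u := by rw [memu]; tauto
      refine Prod.ext ?_ ?_
      · apply Fin.ext
        simp
      · apply Subtype.ext
        simp only
        refine Prod.ext ?_ ?_ <;> funext c <;> simp only
        · by_cases hca : c = a
          · rw [if_pos (Or.inl hca), hca]; exact (d2 a hanu).symm
          · by_cases hcb : c = b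
            · rw [if_pos (Or.inr hcb), hcb]; exact (d2 b hbnu).symm
            · rw [if_neg (by tauto), if_neg hca, if_neg hcb]
        · by_cases hca : c = a
          · rw [if_pos (Or.inl hca), hca]; exact (d6 a hanu).symm
          · by_cases hcb : c = b
            · rw [if_pos (Or.inr hcb), hcb]; exact (d6 b hbnu).symm
            · rw [if_neg (by tauto), if_neg (by tauto)]
  rw [key, Nat.card_prod]
  simp [Nat.card_eq_fintype_card]
end DDpair


lemma nat_card_sigma {ι : Type*} [Fintype ι] (β : ι → Type*) [∀ b, Finite (β b)] :
    Nat.card (Σ b, β b) = ∑ b, Nat.card (β b) := by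
  letI : ∀ b, Fintype (β b) := fun b => Fintype.ofFinite _
  rw [Nat.card_eq_fintype_card, Fintype.card_sigma]
  exact Finset.sum_congr rfl fun b _ => (Nat.card_eq_fintype_card).symm

section DDmain
variable {α : Type*} [DecidableEq α]


lemma sigma_fiber_ext' {ι X α' : Type*} (ψ : X → α') (g : ι → α') {b c : ι}
    (x : {v : X // ψ v = g b}) (y : {v : X // ψ v = g c})
    (hbc : b = c) (h : x.1 = y.1) :
    (⟨b, x⟩ : Σ i : ι, {v : X // ψ v = g i}) = ⟨c, y⟩ := by
  subst hbc
  cases x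
  cases y
  cases h
  rfl

lemma card_DD_move (i : ℕ) (s : Finset α) {a : α} (ha : a ∈ s) :
    Nat.card {x : DD i s // x.1.1 a ≠ a} =
      ∑ b ∈ s.erase a, Nat.card {x : DD i s // x.1.1 a = b} := by
  have e : {x : DD i s // x.1.1 a ≠ a} ≃
      Σ b : {b // b ∈ s.erase a}, {x : DD i s // x.1.1 a = b.1} := by
    refine ⟨fun x => ⟨⟨x.1.1.1 a, Finset.mem_erase.mpr ⟨x.2, x.1.2.1 a ha⟩⟩, ⟨x.1, rfl⟩⟩,
      fun z => ⟨z.2.1, by rw [z.2.2]; exact (Finset.mem_erase.mp z.1.2).1⟩, ?_, ?_⟩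
    · intro x; rfl
    · rintro ⟨b, x, hx⟩
      exact sigma_fiber_ext' (fun v : DD i s => v.1.1 a) Subtype.val
        ⟨x, rfl⟩ ⟨x, hx⟩ (Subtype.ext hx) rfl
  rw [Nat.card_congr e, nat_card_sigma, ← Finset.sum_coe_sort (s.erase a)]

lemma card_DD (i : ℕ) (s : Finset α) : Nat.card (DD i s) = cim i s.card := by
  classical
  induction s using Finset.strongInduction with
  | _ s IH =>
  rcases s.eq_empty_or_nonempty with rfl | ⟨a, ha⟩
  · rw [card_DD_empty, Finset.card_empty, cim_zero]
  · obtain ⟨k, hk⟩ : ∃ k, s.card = k + 1 :=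
      ⟨s.card - 1, (Nat.succ_pred_eq_of_pos (Finset.card_pos.mpr ⟨a, ha⟩)).symm⟩
    have hek : (s.erase a).card = k := by
      rw [Finset.card_erase_of_mem ha, hk]
      omega
    have hsplit : Nat.card (DD i s) =
        Nat.card {x : DD i s // x.1.1 a = a} + Nat.card {x : DD i s // ¬ x.1.1 a = a} := by
      rw [← Nat.card_sum]
      exact Nat.card_congr (Equiv.sumCompl (fun x : DD i s => x.1.1 a = a)).symm
    have hfix : Nat.card {x : DD i s // x.1.1 a = a} = (if Odd i then 1 else 0) * cim i k := by
      by_cases hodd : Odd i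
      · rw [if_pos hodd, one_mul, card_DD_fix_odd i s ha hodd,
          IH (s.erase a) (Finset.erase_ssubset ha), hek]
      · rw [if_neg hodd, zero_mul]
        have : IsEmpty {x : DD i s // x.1.1 a = a} := by
          constructor
          rintro ⟨x, hxf⟩
          exact hodd (x.2.2.2.2.2.2.2 a ha hxf).1
        exact Nat.card_of_isEmpty
    have hmov : Nat.card {x : DD i s // ¬ x.1.1 a = a} = k * (i * cim i (k - 1)) := by
      rw [card_DD_move i s ha]
      have hterm : ∀ b ∈ s.erase a,
          Nat.card {x : DD i s // x.1.1 a = b} = i * cim i (k - 1) := by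
        intro b hb
        rw [card_DD_pair i s ha hb,
          IH ((s.erase a).erase b)
            (ssubset_of_subset_of_ssubset (Finset.erase_subset _ _) (Finset.erase_ssubset ha)),
          Finset.card_erase_of_mem hb, hek]
      rw [Finset.sum_congr rfl hterm, Finset.sum_const, hek, smul_eq_mul]
    rw [hsplit, hfix, hmov, hk, cim_rec]
    ring
end DDmain

section GLUE

def EE {α : Type*} (μ : α → ℕ) : Type _ :=
  {p : (α → α) × (α → ℕ) //
    (∀ a, p.1 (p.1 a) = a) ∧ (∀ a, μ (p.1 a) = μ a) ∧ (∀ a, p.2 (p.1 a) = p.2 a) ∧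
    (∀ a, p.2 a < μ a) ∧ (∀ a, p.1 a = a → Odd (μ a) ∧ p.2 a = 0)}

lemma card_EE {α : Type*} [Fintype α] [DecidableEq α] (μ : α → ℕ) (hpos : ∀ a, 0 < μ a)
    (n : ℕ) (hle : ∀ a, μ a ≤ n) :
    Nat.card (EE μ) = ∏ i ∈ Finset.Icc 1 n, cim i (Finset.univ.filter (fun j => μ j = i)).card := by
  classical
  have mem : ∀ a : α, μ a ∈ Finset.Icc 1 n := fun a => Finset.mem_Icc.mpr ⟨hpos a, hle a⟩
  have memf : ∀ (i : ℕ) (a : α), a ∈ Finset.univ.filter (fun j => μ j = i) ↔ μ a = i := by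
    intro i a; simp
  have e : EE μ ≃ ∀ i : {i // i ∈ Finset.Icc 1 n},
      DD (i.1 : ℕ) (Finset.univ.filter (fun j => μ j = i.1)) := by
    refine ⟨fun x i => ⟨(fun a => if μ a = i.1 then x.1.1 a else a,
        fun a => if μ a = i.1 then x.1.2 a else 0), ?_⟩,
      fun F => ⟨(fun a => (F ⟨μ a, mem a⟩).1.1 a, fun a => (F ⟨μ a, mem a⟩).1.2 a), ?_⟩,
      ?_, ?_⟩
    · obtain ⟨⟨f0, h0⟩, e1, e2, e3, e4, e5⟩ := x
      simp only at e1 e2 e3 e4 e5 ⊢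
      refine ⟨?_, ?_, ?_, ?_, ?_, ?_, ?_⟩
      · intro a ha
        have hμ : μ a = i.1 := (memf _ a).mp ha
        rw [if_pos hμ]
        exact (memf _ _).mpr (by rw [e2, hμ])
      · intro a ha
        rw [if_neg (fun h => ha ((memf _ a).mpr h))]
      · intro a
        by_cases hμ : μ a = i.1
        · rw [if_pos hμ, if_pos (by rw [e2, hμ]), e1]
        · rw [if_neg hμ, if_neg hμ]
      · intro a
        by_cases hμ : μ a = i.1
        · rw [if_pos hμ, if_pos (by rw [e2, hμ]), e3, if_pos hμ]
        · rw [if_neg hμ]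
      · intro a ha
        have hμ : μ a = i.1 := (memf _ a).mp ha
        rw [if_pos hμ, ← hμ]
        exact e4 a
      · intro a ha
        rw [if_neg (fun h => ha ((memf _ a).mpr h))]
      · intro a ha hfx
        have hμ : μ a = i.1 := (memf _ a).mp ha
        rw [if_pos hμ] at hfx ⊢
        have := e5 a hfx
        rw [hμ] at this
        exact this
    · simp only
      refine ⟨?_, ?_, ?_, ?_, ?_⟩
      · intro a
        have h2 : (F ⟨μ a, mem a⟩).1.1 a ∈ Finset.univ.filter (fun j => μ j = μ a) :=
          (F ⟨μ a, mem a⟩).2.1 a ((memf _ a).mpr rfl)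
        have hμ : μ ((F ⟨μ a, mem a⟩).1.1 a) = μ a := (memf _ _).mp h2
        have hidx : (⟨μ ((F ⟨μ a, mem a⟩).1.1 a), mem _⟩ : {i // i ∈ Finset.Icc 1 n})
            = ⟨μ a, mem a⟩ := Subtype.ext hμ
        have hP := congrArg (fun z : {i // i ∈ Finset.Icc 1 n} => (F z).1) hidx
        simp only at hP
        rw [hP]
        exact (F ⟨μ a, mem a⟩).2.2.2.1 _
      · intro a
        have h2 : (F ⟨μ a, mem a⟩).1.1 a ∈ Finset.univ.filter (fun j => μ j = μ a) :=
          (F ⟨μ a, mem a⟩).2.1 a ((memf _ a).mpr rfl)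
        exact (memf _ _).mp h2
      · intro a
        have h2 : (F ⟨μ a, mem a⟩).1.1 a ∈ Finset.univ.filter (fun j => μ j = μ a) :=
          (F ⟨μ a, mem a⟩).2.1 a ((memf _ a).mpr rfl)
        have hμ : μ ((F ⟨μ a, mem a⟩).1.1 a) = μ a := (memf _ _).mp h2
        have hidx : (⟨μ ((F ⟨μ a, mem a⟩).1.1 a), mem _⟩ : {i // i ∈ Finset.Icc 1 n})
            = ⟨μ a, mem a⟩ := Subtype.ext hμ
        have hP := congrArg (fun z : {i // i ∈ Finset.Icc 1 n} => (F z).1) hidx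
        simp only at hP
        rw [hP]
        exact (F ⟨μ a, mem a⟩).2.2.2.2.1 _
      · intro a
        exact (F ⟨μ a, mem a⟩).2.2.2.2.2.1 a ((memf _ a).mpr rfl)
      · intro a hfx
        exact (F ⟨μ a, mem a⟩).2.2.2.2.2.2.2 a ((memf _ a).mpr rfl) hfx
    · intro x
      apply Subtype.ext
      refine Prod.ext ?_ ?_ <;> funext a <;> simp
    · intro F
      funext i
      apply Subtype.ext
      refine Prod.ext ?_ ?_ <;> funext a <;> simp only
      · by_cases hμ : μ a = i.1
        · have hidx : (⟨μ a, mem a⟩ : {i // i ∈ Finset.Icc 1 n}) = i := Subtype.ext hμ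
          have hP := congrArg (fun z : {i // i ∈ Finset.Icc 1 n} => (F z).1) hidx
          simp only at hP
          rw [if_pos hμ, hP]
        · rw [if_neg hμ]
          exact ((F i).2.2.1 a (fun h => hμ ((memf _ a).mp h))).symm
      · by_cases hμ : μ a = i.1
        · have hidx : (⟨μ a, mem a⟩ : {i // i ∈ Finset.Icc 1 n}) = i := Subtype.ext hμ
          have hP := congrArg (fun z : {i // i ∈ Finset.Icc 1 n} => (F z).1) hidx
          simp only at hP
          rw [if_pos hμ, hP]
        · rw [if_neg hμ]
          exact ((F i).2.2.2.2.2.2.1 a (fun h => hμ ((memf _ a).mp h))).symm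
  rw [Nat.card_congr e, Nat.card_pi]
  rw [← Finset.prod_coe_sort (Finset.Icc 1 n) (fun i => cim i (Finset.univ.filter (fun j => μ j = i)).card)]
  exact Finset.prod_congr rfl fun i _ => by rw [card_DD]

end GLUE


lemma Hook.ext' {h1 h2 : Hook} (hs : h1.size = h2.size) (hh : h1.height = h2.height) :
    h1 = h2 := by
  cases h1; cases h2; simp_all

/-- For a partition `μ` with `mᵢ` parts equal to `i`, the number of special
hook involutions of content `μ` is `∏ᵢ c_{i,mᵢ}`. -/
theorem stmt12 (l : ℕ) (μ : Fin l → ℕ) (hpos : ∀ i, 0 < μ i) (hmono : Antitone μ) :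
    Nat.card {I : HookPerm l // I.IsInvolution ∧
        (∀ i, (I.hooks i).size = μ i) ∧ I.IsSpecial} =
      ∏ i ∈ Finset.Icc 1 (∑ j, μ j),
        cim i (Finset.univ.filter (fun j => μ j = i)).card := by
  classical
  have key := card_EE μ hpos (∑ j, μ j)
    (fun a => Finset.single_le_sum (fun j _ => Nat.zero_le (μ j)) (Finset.mem_univ a))
  rw [← key]
  refine Nat.card_congr ?_
  refine ⟨fun I => ⟨((I.1.perm : Fin l → Fin l), fun a => (I.1.hooks a).height), ?_⟩,
    fun x => ⟨⟨fun a => ⟨μ a, x.1.2 a, hpos a, x.2.2.2.2.1 a⟩,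
      Function.Involutive.toPerm x.1.1 x.2.1⟩, ?_, ?_, ?_⟩, ?_, ?_⟩
  · obtain ⟨⟨hooks, perm⟩, ⟨hinv, hhk⟩, hsz, hsp⟩ := I
    simp only at hhk hsz hsp ⊢
    have hinv' : ∀ a, perm (perm a) = a := fun a => by
      have := Equiv.ext_iff.mp hinv a
      simpa using this
    refine ⟨hinv', ?_, ?_, ?_, ?_⟩
    · intro a
      rw [← hsz (perm a), ← hsz a, hhk a]
    · intro a
      rw [hhk a]
    · intro a
      rw [← hsz a]
      exact (hooks a).height_lt
    · intro a ha
      rw [← hsz a]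
      exact hsp a ha
  · -- IsInvolution
    obtain ⟨⟨f0, h0⟩, e1, e2, e3, e4, e5⟩ := x
    simp only at e1 e2 e3 e4 e5 ⊢
    constructor
    · apply Equiv.ext
      intro a
      simp [Function.Involutive.toPerm, e1 a]
    · intro a
      exact Hook.ext' (e2 a) (e3 a)
  · -- sizes
    intro a; rfl
  · -- IsSpecial
    obtain ⟨⟨f0, h0⟩, e1, e2, e3, e4, e5⟩ := x
    intro a ha
    exact e5 a ha
  · -- left inverse
    rintro ⟨⟨hooks, perm⟩, ⟨hinv, hhk⟩, hsz, hsp⟩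
    apply Subtype.ext
    simp only [HookPerm.mk.injEq]
    constructor
    · funext a
      exact Hook.ext' ((hsz a).symm) rfl
    · apply Equiv.ext
      intro a
      rfl
  · -- right inverse
    rintro ⟨⟨f0, h0⟩, e1, e2, e3, e4, e5⟩
    rfl
end

section
/- Let c₁ and c₂ be two disjoint cycles of length m in the symmetric group S_n (their supports are disjoint). Then there exist exactly m permutations c in S_n that are cycles of length 2m and satisfy c² = c₁·c₂. -/
open Equiv Equiv.Perm Finset

namespace Stmt15

variable {n : ℕ} {c₁ c₂ c : Equiv.Perm (Fin n)} {x : Fin n}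

lemma even_pow (hd : c₁.Disjoint c₂) (hc : c * c = c₁ * c₂)
    (hx : c₂ x = x) (j : ℕ) : (c ^ (2 * j)) x = (c₁ ^ j) x := by
  have h1 : c ^ (2 * j) = (c * c) ^ j := by rw [← sq, pow_mul]
  rw [h1, hc, hd.commute.mul_pow, mul_apply,
    pow_apply_eq_self_of_apply_eq_self hx]

end Stmt15

/-- If `c₁`, `c₂` are disjoint cycles of length `m` in `Sₙ`, there are exactly
`m` cycles `c` of length `2m` with `c² = c₁·c₂`. -/
theorem stmt15 (n m : ℕ) (c₁ c₂ : Equiv.Perm (Fin n))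
    (h₁ : c₁.IsCycle) (h₂ : c₂.IsCycle)
    (hs₁ : c₁.support.card = m) (hs₂ : c₂.support.card = m)
    (hdisj : Disjoint c₁.support c₂.support) :
    Nat.card {c : Equiv.Perm (Fin n) //
        c.IsCycle ∧ c.support.card = 2 * m ∧ c * c = c₁ * c₂} = m := by
  classical
  have hm2 : 2 ≤ m := hs₁ ▸ h₁.two_le_card_support
  have hd : c₁.Disjoint c₂ := Equiv.Perm.disjoint_iff_disjoint_support.mpr hdisj
  have hcard_u : (c₁.support ∪ c₂.support).card = 2 * m := by
    rw [Finset.card_union_of_disjoint hdisj, hs₁, hs₂]; ring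
  obtain ⟨x, hx⟩ : ∃ x, x ∈ c₁.support := by
    have : 0 < c₁.support.card := by omega
    exact Finset.card_pos.mp this
  have hx2 : x ∉ c₂.support := Finset.disjoint_left.mp hdisj hx
  have hc₂x : c₂ x = x := Equiv.Perm.notMem_support.mp hx2
  -- support of any square root is the union
  have hsupp : ∀ c : Equiv.Perm (Fin n),
      c.IsCycle ∧ c.support.card = 2 * m ∧ c * c = c₁ * c₂ →
      c.support = c₁.support ∪ c₂.support := by
    rintro c ⟨hc, hcard, hsq⟩
    have hsub : c₁.support ∪ c₂.support ⊆ c.support := by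
      rw [← hd.support_mul, ← hsq]
      intro z hz
      have := Equiv.Perm.support_mul_le c c hz
      simpa using this
    exact (Finset.eq_of_subset_of_card_le hsub (by omega)).symm
  have hxc : ∀ c : Equiv.Perm (Fin n),
      c.IsCycle ∧ c.support.card = 2 * m ∧ c * c = c₁ * c₂ → x ∈ c.support := by
    intro c hP
    rw [hsupp c hP]
    exact Finset.mem_union_left _ hx
  -- any square root maps x into c₂.support
  have hmap : ∀ c : Equiv.Perm (Fin n),
      c.IsCycle ∧ c.support.card = 2 * m ∧ c * c = c₁ * c₂ →
      c x ∈ c₂.support := by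
    intro c hP
    obtain ⟨hc, hcard, hsq⟩ := hP
    have hxs : x ∈ c.support := hxc c ⟨hc, hcard, hsq⟩
    have hcx : c x ∈ c.support := Equiv.Perm.apply_mem_support.mpr hxs
    rw [hsupp c ⟨hc, hcard, hsq⟩] at hcx
    rcases Finset.mem_union.mp hcx with h1 | h2
    · exfalso
      obtain ⟨j, hj, hjx⟩ :=
        (h₁.sameCycle (Equiv.Perm.mem_support.mp hx)
          (Equiv.Perm.mem_support.mp h1)).exists_pow_eq'
      rw [h₁.orderOf, hs₁] at hj
      have hje : (c ^ (2 * j)) x = c x := by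
        rw [Stmt15.even_pow hd hsq hc₂x]; exact hjx
      rcases Nat.eq_zero_or_pos j with rfl | hj0
      · simp at hje
        exact (Equiv.Perm.mem_support.mp hxs) hje.symm
      · have hfix : (c ^ (2 * j - 1)) x = x := by
          have h2j : 2 * j = (2 * j - 1) + 1 := by omega
          rw [h2j, pow_succ', mul_apply] at hje
          exact c.injective hje
        have hone : c ^ (2 * j - 1) = 1 :=
          hc.pow_eq_one_iff.mpr ⟨x, Equiv.Perm.mem_support.mp hxs, hfix⟩
        have hdvd : orderOf c ∣ 2 * j - 1 := orderOf_dvd_of_pow_eq_one hone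
        rw [hc.orderOf, hcard] at hdvd
        have := Nat.le_of_dvd (by omega) hdvd
        omega
    · exact h2
  -- injectivity
  have hinj : ∀ c c' : Equiv.Perm (Fin n),
      (c.IsCycle ∧ c.support.card = 2 * m ∧ c * c = c₁ * c₂) →
      (c'.IsCycle ∧ c'.support.card = 2 * m ∧ c' * c' = c₁ * c₂) →
      c x = c' x → c = c' := by
    intro c c' hP hP' hxx
    have hk : ∀ k : ℕ, (c ^ k) x = (c' ^ k) x := by
      intro k
      have e1 : c ^ k = (c * c) ^ (k / 2) * c ^ (k % 2) := by
        rw [← sq, ← pow_mul, ← pow_add]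
        congr 1; omega
      have e2 : c' ^ k = (c' * c') ^ (k / 2) * c' ^ (k % 2) := by
        rw [← sq, ← pow_mul, ← pow_add]
        congr 1; omega
      rw [e1, e2, hP.2.2, hP'.2.2, mul_apply, mul_apply]
      congr 1
      rcases Nat.mod_two_eq_zero_or_one k with h | h <;> rw [h] <;>
        simp [hxx]
    ext z
    by_cases hz : z ∈ c.support
    · obtain ⟨k, hk', hkz⟩ :=
        (hP.1.sameCycle (Equiv.Perm.mem_support.mp (hxc c hP))
          (Equiv.Perm.mem_support.mp hz)).exists_pow_eq'
      have h1 : c z = (c ^ (k + 1)) x := by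
        rw [pow_succ', mul_apply, hkz]
      have h2 : c' z = (c' ^ (k + 1)) x := by
        rw [pow_succ', mul_apply, ← hk k, hkz]
      rw [h1, h2, hk (k + 1)]
    · have hz' : z ∉ c'.support := by
        rw [hsupp c' hP', ← hsupp c hP]; exact hz
      rw [Equiv.Perm.notMem_support.mp hz, Equiv.Perm.notMem_support.mp hz']
  -- surjectivity
  have hsurj : ∀ y ∈ c₂.support, ∃ c : Equiv.Perm (Fin n),
      (c.IsCycle ∧ c.support.card = 2 * m ∧ c * c = c₁ * c₂) ∧ c x = y := by
    intro y hy
    obtain ⟨g0, hg0⟩ := isConj_iff.mp (h₁.isConj h₂ (by rw [hs₁, hs₂]))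
    have hg0x : g0 x ∈ c₂.support := by
      rw [← hg0, Equiv.Perm.support_conj]
      exact Finset.mem_map_of_mem _ hx
    obtain ⟨k, hk⟩ := h₂.exists_pow_eq (Equiv.Perm.mem_support.mp hg0x)
      (Equiv.Perm.mem_support.mp hy)
    set g : Equiv.Perm (Fin n) := c₂ ^ k * g0 with hgdef
    have hgc : g * c₁ * g⁻¹ = c₂ := by
      have : g * c₁ * g⁻¹ = c₂ ^ k * (g0 * c₁ * g0⁻¹) * (c₂ ^ k)⁻¹ := by
        rw [hgdef]; group
      rw [this, hg0]
      group
    have hg : ∀ z, g (c₁ z) = c₂ (g z) := by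
      intro z
      have h' : g * c₁ = c₂ * g := by
        rw [← hgc]; group
      calc g (c₁ z) = (g * c₁) z := rfl
        _ = (c₂ * g) z := by rw [h']
        _ = c₂ (g z) := rfl
    have hgx : g x = y := by
      rw [hgdef]; simpa [mul_apply] using hk
    have hgs : ∀ z, z ∈ c₁.support ↔ g z ∈ c₂.support := by
      intro z
      rw [← hgc, Equiv.Perm.support_conj]
      exact (Finset.mem_map' _).symm
    have hgg : ∀ z, z ∈ c₂.support ↔ g⁻¹ z ∈ c₁.support := by
      intro z
      rw [hgs (g⁻¹ z)]
      simp
    set f : Fin n → Fin n := fun z =>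
      if z ∈ c₁.support then g z else if z ∈ c₂.support then g⁻¹ z else z
      with hf
    have hinvo : Function.Involutive f := by
      intro z
      by_cases h1 : z ∈ c₁.support
      · have h2 : g z ∈ c₂.support := (hgs z).mp h1
        have h3 : g z ∉ c₁.support := Finset.disjoint_right.mp hdisj h2
        simp only [hf]
        rw [if_pos h1, if_neg h3, if_pos h2, Equiv.Perm.inv_def, Equiv.symm_apply_apply]
      · by_cases h2 : z ∈ c₂.support
        · have h3 : g⁻¹ z ∈ c₁.support := (hgg z).mp h2
          simp only [hf]
          rw [if_neg h1, if_pos h2, if_pos h3, Equiv.Perm.inv_def, Equiv.apply_symm_apply]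
        · simp only [hf]
          rw [if_neg h1, if_neg h2, if_neg h1, if_neg h2]
    set c : Equiv.Perm (Fin n) := hinvo.toPerm * c₂ with hcdef
    have hcz : ∀ z, c z = f (c₂ z) := by
      intro z; rw [hcdef, mul_apply]; rfl
    have hc1 : ∀ z ∈ c₁.support, c z = g z := by
      intro z hz
      have hz2 : z ∉ c₂.support := Finset.disjoint_left.mp hdisj hz
      rw [hcz, Equiv.Perm.notMem_support.mp hz2]
      simp only [hf]
      rw [if_pos hz]
    have hc2 : ∀ z ∈ c₂.support, c z = g⁻¹ (c₂ z) := by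
      intro z hz
      have hz2 : c₂ z ∈ c₂.support := Equiv.Perm.apply_mem_support.mpr hz
      have hz1 : c₂ z ∉ c₁.support := Finset.disjoint_right.mp hdisj hz2
      rw [hcz]
      simp only [hf]
      rw [if_neg hz1, if_pos hz2]
    have hc0 : ∀ z, z ∉ c₁.support → z ∉ c₂.support → c z = z := by
      intro z h1 h2
      rw [hcz, Equiv.Perm.notMem_support.mp h2]
      simp only [hf]
      rw [if_neg h1, if_neg h2]
    have hsupc : c.support = c₁.support ∪ c₂.support := by
      ext z
      rw [Equiv.Perm.mem_support, Finset.mem_union]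
      constructor
      · intro h
        by_contra h'
        push_neg at h'
        exact h (hc0 z h'.1 h'.2)
      · rintro (h | h)
        · rw [hc1 z h]
          intro he
          have : g z ∈ c₂.support := (hgs z).mp h
          rw [he] at this
          exact Finset.disjoint_left.mp hdisj h this
        · rw [hc2 z h]
          intro he
          have hz2 : c₂ z ∈ c₂.support := Equiv.Perm.apply_mem_support.mpr h
          have : g⁻¹ (c₂ z) ∈ c₁.support := (hgg _).mp hz2
          rw [he] at this
          exact Finset.disjoint_left.mp hdisj this h
    have hsq : c * c = c₁ * c₂ := by
      refine Equiv.ext fun z => ?_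
      show c (c z) = c₁ (c₂ z)
      by_cases h1 : z ∈ c₁.support
      · have hz2 : z ∉ c₂.support := Finset.disjoint_left.mp hdisj h1
        have h2 : g z ∈ c₂.support := (hgs z).mp h1
        rw [hc1 z h1, hc2 _ h2, ← hg z, Equiv.Perm.inv_def, Equiv.symm_apply_apply,
          Equiv.Perm.notMem_support.mp hz2]
      · by_cases h2 : z ∈ c₂.support
        · have hz2 : c₂ z ∈ c₂.support := Equiv.Perm.apply_mem_support.mpr h2
          have hz1 : c₂ z ∉ c₁.support := Finset.disjoint_right.mp hdisj hz2
          have h3 : g⁻¹ (c₂ z) ∈ c₁.support := (hgg _).mp hz2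
          rw [hc2 z h2, hc1 _ h3, Equiv.Perm.inv_def, Equiv.apply_symm_apply,
            Equiv.Perm.notMem_support.mp hz1]
        · rw [hc0 z h1 h2, hc0 z h1 h2, Equiv.Perm.notMem_support.mp h2,
            Equiv.Perm.notMem_support.mp h1]
    have hcx : c x = y := by rw [hc1 x hx]; exact hgx
    have hcardc : c.support.card = 2 * m := by rw [hsupc]; exact hcard_u
    have hxmoved : c x ≠ x := by
      rw [hcx]
      intro he
      rw [he] at hy
      exact hx2 hy
    have hcycle : c.IsCycle := by
      refine ⟨x, hxmoved, ?_⟩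
      intro z hz
      have hz' : z ∈ c₁.support ∪ c₂.support := by
        rw [← hsupc]; exact Equiv.Perm.mem_support.mpr hz
      rcases Finset.mem_union.mp hz' with h | h
      · obtain ⟨j, hj⟩ := h₁.exists_pow_eq (Equiv.Perm.mem_support.mp hx)
          (Equiv.Perm.mem_support.mp h)
        refine ⟨(2 * j : ℕ), ?_⟩
        rw [zpow_natCast, Stmt15.even_pow hd hsq hc₂x]
        exact hj
      · obtain ⟨j, hj⟩ := h₂.exists_pow_eq (Equiv.Perm.mem_support.mp hy)
          (Equiv.Perm.mem_support.mp h)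
        refine ⟨(2 * j + 1 : ℕ), ?_⟩
        have hzs2 : z ∈ c₂.support := h
        have hz1 : z ∉ c₁.support := Finset.disjoint_right.mp hdisj hzs2
        rw [zpow_natCast, pow_succ, mul_apply, hcx]
        have e1 : c ^ (2 * j) = (c * c) ^ j := by rw [← sq, pow_mul]
        rw [e1, hsq, hd.commute.mul_pow, mul_apply, hj,
          pow_apply_eq_self_of_apply_eq_self (Equiv.Perm.notMem_support.mp hz1)]
    exact ⟨c, ⟨hcycle, hcardc, hsq⟩, hcx⟩
  -- conclude by the bijection c ↦ c x
  have hbij : Function.Bijective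
      (fun c : {c : Equiv.Perm (Fin n) //
          c.IsCycle ∧ c.support.card = 2 * m ∧ c * c = c₁ * c₂} =>
        (⟨c.1 x, hmap c.1 c.2⟩ : {y : Fin n // y ∈ c₂.support})) := by
    constructor
    · rintro ⟨c, hc⟩ ⟨c', hc'⟩ h
      simp only [Subtype.mk.injEq] at h
      exact Subtype.ext (hinj c c' hc hc' h)
    · rintro ⟨y, hy⟩
      obtain ⟨c, hP, hcx⟩ := hsurj y hy
      exact ⟨⟨c, hP⟩, Subtype.ext hcx⟩
  rw [Nat.card_eq_of_bijective _ hbij, Nat.card_eq_fintype_card,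
    Fintype.card_coe, hs₂]
end

section
/- Let m be an odd positive integer and let c₁ be a cycle of length m in the symmetric group S_n. Then there exists exactly one cycle c of length m in S_n such that c² = c₁. -/
/-- If `m` is odd and `c₁` is a cycle of length `m` in `Sₙ`, there is a unique
cycle `c` of length `m` with `c² = c₁`. -/
theorem stmt16 (n m : ℕ) (hm : Odd m) (hmpos : 0 < m)
    (c₁ : Equiv.Perm (Fin n)) (h₁ : c₁.IsCycle) (hs₁ : c₁.support.card = m) :
    Nat.card {c : Equiv.Perm (Fin n) //
        c.IsCycle ∧ c.support.card = m ∧ c * c = c₁} = 1 := by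
  obtain ⟨t, ht⟩ := hm
  set k := t + 1 with hk
  have hord : orderOf c₁ = m := by rw [h₁.orderOf, hs₁]
  have h2k : 2 * k = m + 1 := by omega
  have hcop : Nat.Coprime k m := by
    have : Nat.gcd k m ∣ 1 := by
      have h1 : Nat.gcd k m ∣ k := Nat.gcd_dvd_left _ _
      have h2 : Nat.gcd k m ∣ m := Nat.gcd_dvd_right _ _
      have h3 : Nat.gcd k m ∣ 2 * k - m := Nat.dvd_sub (h1.mul_left 2) h2
      simpa [h2k] using h3
    exact Nat.eq_one_of_dvd_one this
  -- uniqueness: any solution equals c₁ ^ k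
  have hpow : ∀ c : Equiv.Perm (Fin n), c.IsCycle → c.support.card = m →
      c * c = c₁ → c = c₁ ^ k := by
    intro c hc hcard hsq
    have hcm : c ^ m = 1 := by
      have : orderOf c = m := by rw [hc.orderOf, hcard]
      rw [← this]; exact pow_orderOf_eq_one c
    calc c = c ^ m * c := by rw [hcm, one_mul]
      _ = c ^ (m + 1) := by rw [pow_succ]
      _ = c ^ (2 * k) := by rw [h2k]
      _ = (c * c) ^ k := by rw [← sq, ← pow_mul]
      _ = c₁ ^ k := by rw [hsq]
  -- existence
  have hcyc : (c₁ ^ k).IsCycle := h₁.pow_iff.mpr (by rwa [hord])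
  have hsupp : (c₁ ^ k).support.card = m := by
    rw [Equiv.Perm.support_pow_coprime (by rwa [hord]), hs₁]
  have hsq : c₁ ^ k * c₁ ^ k = c₁ := by
    rw [← pow_add, ← two_mul, h2k, pow_succ, ← hord, pow_orderOf_eq_one, one_mul]
  rw [Nat.card_eq_one_iff_unique]
  constructor
  · constructor
    rintro ⟨a, ha1, ha2, ha3⟩ ⟨b, hb1, hb2, hb3⟩
    simp only [Subtype.mk.injEq]
    rw [hpow a ha1 ha2 ha3, hpow b hb1 hb2 hb3]
  · exact ⟨⟨c₁ ^ k, hcyc, hsupp, hsq⟩⟩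
end

section
/- Let λ ⊆ μ ⊆ ξ be partitions such that μ/λ and ξ/μ are both nonempty ribbons. Then exactly one of the following two cases occurs: (1) there exists a partition ν with λ ⊆ ν ⊆ ξ such that ν/λ and ξ/ν are ribbons with |ν/λ| = |ξ/μ| and |ξ/ν| = |μ/λ|, and ε(ν/λ)·ε(ξ/ν) = ε(μ/λ)·ε(ξ/μ); (2) there exists a partition μ̂ ≠ μ with λ ⊆ μ̂ ⊆ ξ such that μ̂/λ and ξ/μ̂ are ribbons with |μ̂/λ| = |μ/λ| and |ξ/μ̂| = |ξ/μ|, and ε(μ̂/λ)·ε(ξ/μ̂) = −ε(μ/λ)·ε(ξ/μ). -/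
/-- Two cells of `ℕ × ℕ` are adjacent when they share a side. -/
def CellAdj (a b : ℕ × ℕ) : Prop :=
  (a.1 = b.1 ∧ (a.2 + 1 = b.2 ∨ b.2 + 1 = a.2)) ∨
  (a.2 = b.2 ∧ (a.1 + 1 = b.1 ∨ b.1 + 1 = a.1))

/-- A finite set of cells is connected if any two of its cells are joined by a
path of cells of the set, consecutive ones sharing a side. -/
def ConnectedCells (S : Finset (ℕ × ℕ)) : Prop :=
  ∀ a ∈ S, ∀ b ∈ S,
    Relation.ReflTransGen (fun x y => x ∈ S ∧ y ∈ S ∧ CellAdj x y) a b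

/-- `S` contains no 2 × 2 square of cells. -/
def NoTwoByTwo (S : Finset (ℕ × ℕ)) : Prop :=
  ¬ ∃ i j : ℕ, (i, j) ∈ S ∧ (i + 1, j) ∈ S ∧ (i, j + 1) ∈ S ∧ (i + 1, j + 1) ∈ S

/-- The cells of the skew shape `μ / ν` (`ν` first argument, `μ` second). -/
def skewCells (ν μ : YoungDiagram) : Finset (ℕ × ℕ) :=
  μ.cells \ ν.cells

/-- `μ / ν` is a ribbon: a nonempty connected skew shape with no 2 × 2 square. -/
def IsRibbon (ν μ : YoungDiagram) : Prop :=
  ν ≤ μ ∧ (skewCells ν μ).Nonempty ∧ ConnectedCells (skewCells ν μ) ∧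
    NoTwoByTwo (skewCells ν μ)

/-- The height of the skew shape `μ / ν`: the number of rows it occupies, minus one. -/
def skewHeight (ν μ : YoungDiagram) : ℕ :=
  ((skewCells ν μ).image Prod.fst).card - 1

/-- The sign of the skew shape `μ / ν`, i.e. `(-1) ^ height`. -/
def skewSign (ν μ : YoungDiagram) : ℤ :=
  (-1) ^ skewHeight ν μ

open YoungDiagram

-- ## auxiliary

lemma cellAdj_symm {a b : ℕ × ℕ} (h : CellAdj a b) : CellAdj b a := by
  unfold CellAdj at *; tauto

lemma le_of_rowLen_le {l m : YoungDiagram} (h : ∀ i, l.rowLen i ≤ m.rowLen i) : l ≤ m := by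
  intro ⟨i, j⟩ hm
  rw [mem_iff_lt_rowLen] at hm ⊢
  exact lt_of_lt_of_le hm (h i)

lemma mem_skewCells {l m : YoungDiagram} {i j : ℕ} :
    (i, j) ∈ skewCells l m ↔ l.rowLen i ≤ j ∧ j < m.rowLen i := by
  unfold skewCells
  rw [Finset.mem_sdiff, mem_cells, mem_cells, mem_iff_lt_rowLen, mem_iff_lt_rowLen]
  omega

structure RowRibbon (l m : YoungDiagram) (r s : ℕ) : Prop where
  hrs : r ≤ s
  lo : ∀ i, i < r → m.rowLen i = l.rowLen i
  hi : ∀ i, s < i → m.rowLen i = l.rowLen i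
  top : l.rowLen r < m.rowLen r
  step : ∀ i, r < i → i ≤ s → m.rowLen i = l.rowLen (i-1) + 1

namespace RowRibbon

variable {l m : YoungDiagram} {r s : ℕ} (h : RowRibbon l m r s)
include h

lemma inside : ∀ i, r ≤ i → i ≤ s → l.rowLen i < m.rowLen i := by
  intro i h1 h2
  rcases Nat.eq_or_lt_of_le h1 with rfl | h1
  · exact h.top
  · have := h.step i h1 h2
    have := l.rowLen_anti (i-1) i (by omega)
    omega

lemma rowLen_le : ∀ i, l.rowLen i ≤ m.rowLen i := by
  intro i
  rcases Nat.lt_or_ge i r with hr | hr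
  · rw [h.lo i hr]
  rcases Nat.lt_or_ge s i with hs | hs
  · rw [h.hi i hs]
  · exact le_of_lt (h.inside i hr hs)

lemma le : l ≤ m := le_of_rowLen_le h.rowLen_le

lemma row_range {i j : ℕ} (hij : (i, j) ∈ skewCells l m) : r ≤ i ∧ i ≤ s := by
  rw [mem_skewCells] at hij
  constructor
  · by_contra hc
    have := h.lo i (by omega)
    omega
  · by_contra hc
    have := h.hi i (by omega)
    omega

lemma reach_right : ∀ (d i j : ℕ), (i,j) ∈ skewCells l m → m.rowLen i - 1 - j = d →
    Relation.ReflTransGen (fun x y => x ∈ skewCells l m ∧ y ∈ skewCells l m ∧ CellAdj x y)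
      (i, j) (i, m.rowLen i - 1) := by
  intro d
  induction d with
  | zero =>
    intro i j hij hd
    have := mem_skewCells.1 hij
    have : j = m.rowLen i - 1 := by omega
    subst this
    exact Relation.ReflTransGen.refl
  | succ d ih =>
    intro i j hij hd
    have hm := mem_skewCells.1 hij
    have h1 : (i, j+1) ∈ skewCells l m := mem_skewCells.2 (by omega)
    refine Relation.ReflTransGen.head ⟨hij, h1, ?_⟩ (ih i (j+1) h1 (by omega))
    left; exact ⟨rfl, Or.inl rfl⟩

lemma reach_top : ∀ (k i : ℕ), r ≤ i → i ≤ s → i - r = k →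
    Relation.ReflTransGen (fun x y => x ∈ skewCells l m ∧ y ∈ skewCells l m ∧ CellAdj x y)
      (i, m.rowLen i - 1) (r, m.rowLen r - 1) := by
  intro k
  induction k with
  | zero =>
    intro i h1 h2 hk
    have : i = r := by omega
    subst this
    exact Relation.ReflTransGen.refl
  | succ k ih =>
    intro i h1 h2 hk
    have hir : r < i := by omega
    have hstep := h.step i hir h2
    have hin := h.inside i (by omega) h2
    have hin' := h.inside (i-1) (by omega) (by omega)
    have hc1 : (i, m.rowLen i - 1) ∈ skewCells l m := mem_skewCells.2 (by omega)
    have hc2 : (i - 1, m.rowLen i - 1) ∈ skewCells l m := by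
      refine mem_skewCells.2 ⟨by omega, ?_⟩
      have := m.rowLen_anti (i-1) i (by omega)
      omega
    refine Relation.ReflTransGen.head ⟨hc1, hc2, ?_⟩ ?_
    · right
      refine ⟨rfl, Or.inr ?_⟩
      show (i - 1) + 1 = i
      omega
    · refine Relation.ReflTransGen.trans
        (reach_right h (m.rowLen (i-1) - 1 - (m.rowLen i - 1)) (i-1) (m.rowLen i - 1) hc2 rfl) ?_
      exact ih (i-1) (by omega) (by omega) (by omega)

lemma connected : ConnectedCells (skewCells l m) := by
  have hsym : ∀ a b, (a ∈ skewCells l m ∧ b ∈ skewCells l m ∧ CellAdj a b) →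
      (b ∈ skewCells l m ∧ a ∈ skewCells l m ∧ CellAdj b a) := by
    rintro a b ⟨x, y, z⟩; exact ⟨y, x, cellAdj_symm z⟩
  intro a ha b hb
  obtain ⟨i, j⟩ := a
  obtain ⟨i', j'⟩ := b
  have hra := (h.row_range ha)
  have hrb := (h.row_range hb)
  have p1 := Relation.ReflTransGen.trans
    (reach_right h _ i j ha rfl) (reach_top h _ i hra.1 hra.2 rfl)
  have p2 := Relation.ReflTransGen.trans
    (reach_right h _ i' j' hb rfl) (reach_top h _ i' hrb.1 hrb.2 rfl)
  exact Relation.ReflTransGen.trans p1 ((@Relation.ReflTransGen.symmetric _ _ ⟨hsym⟩).symm _ _ p2)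

lemma noTwoByTwo : NoTwoByTwo (skewCells l m) := by
  rintro ⟨i, j, h1, h2, h3, h4⟩
  have m1 := mem_skewCells.1 h1
  have m2 := mem_skewCells.1 h2
  have m4 := mem_skewCells.1 h4
  have hr1 := h.row_range h1
  have hr2 := h.row_range h2
  have := h.step (i+1) (by omega) (by omega)
  simp only [Nat.add_sub_cancel] at this
  omega

lemma isRibbon : IsRibbon l m := by
  refine ⟨h.le, ⟨(r, l.rowLen r), mem_skewCells.2 ⟨le_refl _, h.top⟩⟩, h.connected, h.noTwoByTwo⟩

end RowRibbon

noncomputable section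
open Classical

/-- beta numbers -/
def beta (l : YoungDiagram) (i : ℕ) : ℤ := (l.rowLen i : ℤ) - i

def beads (l : YoungDiagram) : Set ℤ := Set.range (beta l)

lemma rowLen_le_of_le {l m : YoungDiagram} (h : l ≤ m) (i : ℕ) :
    l.rowLen i ≤ m.rowLen i := by
  rcases Nat.eq_zero_or_pos (l.rowLen i) with h0 | h0
  · omega
  · have : (i, l.rowLen i - 1) ∈ l := mem_iff_lt_rowLen.2 (by omega)
    have h2 : (i, l.rowLen i - 1) ∈ m := h this
    rw [mem_iff_lt_rowLen] at h2
    omega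

lemma beta_strictAnti (l : YoungDiagram) : StrictAnti (beta l) := by
  apply strictAnti_nat_of_succ_lt
  intro i
  have := l.rowLen_anti i (i+1) (by omega)
  unfold beta
  push_cast
  omega

lemma beta_injective (l : YoungDiagram) : Function.Injective (beta l) :=
  (beta_strictAnti l).injective

lemma beta_lt_iff {l : YoungDiagram} {i j : ℕ} : beta l i < beta l j ↔ j < i :=
  (beta_strictAnti l).lt_iff_gt

lemma neg_le_beta (l : YoungDiagram) (i : ℕ) : -(i:ℤ) ≤ beta l i := by
  unfold beta; have : (0:ℤ) ≤ l.rowLen i := Int.ofNat_nonneg _; omega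


lemma strictAnti_range_eq {f g : ℕ → ℤ} (hf : StrictAnti f) (hg : StrictAnti g)
    (h : Set.range f = Set.range g) : f = g := by
  funext i
  induction i using Nat.strong_induction_on with
  | _ i ih =>
    by_contra hne
    rcases lt_or_gt_of_ne hne with hlt | hlt
    · -- f i < g i ; g i ∈ range f so g i = f j, f j > f i so j < i, then g j = f j = g i, j < i contra
      have : g i ∈ Set.range f := h ▸ Set.mem_range_self i
      obtain ⟨j, hj⟩ := this
      have hji : j < i := by
        have := hf.lt_iff_gt (a := i) (b := j)
        omega
      have := ih j hji
      rw [this] at hj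
      have := hg.injective hj
      omega
    · have : f i ∈ Set.range g := h ▸ Set.mem_range_self i
      obtain ⟨j, hj⟩ := this
      have hji : j < i := by
        have := hg.lt_iff_gt (a := i) (b := j)
        omega
      have := ih j hji
      rw [← this] at hj
      have := hf.injective hj.symm
      omega

lemma beads_inj {l m : YoungDiagram} (h : beads l = beads m) : l = m := by
  have hb : beta l = beta m := strictAnti_range_eq (beta_strictAnti l) (beta_strictAnti m) h
  have hr : ∀ i, l.rowLen i = m.rowLen i := by
    intro i
    have := congrFun hb i
    unfold beta at this
    omega
  ext ⟨i, j⟩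
  simp only [YoungDiagram.mem_cells, mem_iff_lt_rowLen, hr]

/-- Build a Young diagram from a row-length function. -/
def ofRowFn (f : ℕ → ℕ) (N : ℕ) (hf : ∀ i j, i ≤ j → f j ≤ f i)
    (hN : ∀ i, N ≤ i → f i = 0) : YoungDiagram where
  cells := (Finset.range N).biUnion fun i => (Finset.range (f i)).image fun j => (i, j)
  isLowerSet := by
    rintro ⟨i1, j1⟩ ⟨i2, j2⟩ ⟨hi, hj⟩ hm
    simp only [Finset.coe_biUnion, Finset.mem_coe, Finset.mem_range, Set.mem_iUnion,
      Finset.mem_image, Prod.mk.injEq] at hm ⊢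
    obtain ⟨i, hiN, j, hjf, rfl, rfl⟩ := hm
    simp only at hi hj
    exact ⟨i2, by omega, j2, by have := hf i2 i hi; omega, rfl, rfl⟩

lemma mem_ofRowFn {f : ℕ → ℕ} {N : ℕ} {hf} {hN} {i j : ℕ} :
    (i, j) ∈ ofRowFn f N hf hN ↔ j < f i := by
  show (i, j) ∈ (Finset.range N).biUnion _ ↔ _
  simp only [Finset.mem_biUnion, Finset.mem_range, Finset.mem_image, Prod.mk.injEq]
  constructor
  · rintro ⟨a, haN, b, hbf, rfl, rfl⟩; exact hbf
  · intro hj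
    refine ⟨i, ?_, j, hj, rfl, rfl⟩
    by_contra hNi
    have := hN i (by omega)
    omega

lemma rowLen_ofRowFn (f : ℕ → ℕ) (N : ℕ) (hf) (hN) (i : ℕ) :
    (ofRowFn f N hf hN).rowLen i = f i := by
  have h1 : ∀ j, (i, j) ∈ ofRowFn f N hf hN ↔ j < f i := fun j => mem_ofRowFn
  have h2 : ∀ j, j < (ofRowFn f N hf hN).rowLen i ↔ j < f i := by
    intro j
    rw [← mem_iff_lt_rowLen]
    exact h1 j
  rcases Nat.lt_trichotomy ((ofRowFn f N hf hN).rowLen i) (f i) with h | h | h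
  · have := (h2 ((ofRowFn f N hf hN).rowLen i)).2 h; omega
  · exact h
  · have := (h2 (f i)).1 h; omega


lemma rtg_invariant {α : Type*} {R : α → α → Prop} {P : α → Prop} {a b : α}
    (hab : Relation.ReflTransGen R a b) (ha : P a)
    (hstep : ∀ x y, R x y → P x → P y) : P b := by
  induction hab with
  | refl => exact ha
  | tail h1 h2 ih => exact hstep _ _ h2 ih

lemma cellAdj_cases {x1 x2 y1 y2 : ℕ} (h : CellAdj (x1, x2) (y1, y2)) :
    (x1 = y1 ∧ (x2 + 1 = y2 ∨ y2 + 1 = x2)) ∨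
    (x2 = y2 ∧ (x1 + 1 = y1 ∨ y1 + 1 = x1)) := h

lemma isRibbon_rowRibbon {l m : YoungDiagram} (hR : IsRibbon l m) :
    ∃ r s, RowRibbon l m r s := by
  obtain ⟨hle, hne, hconn, h22⟩ := hR
  have hrow : ∀ i, l.rowLen i ≤ m.rowLen i := fun i => rowLen_le_of_le hle i
  have hO : ((skewCells l m).image Prod.fst).Nonempty := hne.image _
  set S := skewCells l m with hS
  set r := (S.image Prod.fst).min' hO with hr
  set s := (S.image Prod.fst).max' hO with hs'
  have hocc : ∀ i, i ∈ S.image Prod.fst ↔ l.rowLen i < m.rowLen i := by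
    intro i
    simp only [Finset.mem_image]
    constructor
    · rintro ⟨⟨i', j⟩, hij, rfl⟩
      have := mem_skewCells.1 hij
      show l.rowLen i' < m.rowLen i'
      omega
    · intro hi
      exact ⟨(i, l.rowLen i), mem_skewCells.2 ⟨le_refl _, hi⟩, rfl⟩
  have hrs : r ≤ s := Finset.min'_le _ _ ((S.image Prod.fst).max'_mem hO)
  have houtside : ∀ i, (i < r ∨ s < i) → m.rowLen i = l.rowLen i := by
    intro i hi
    by_contra hc
    have h1 : l.rowLen i < m.rowLen i := by have := hrow i; omega
    have h2 : i ∈ S.image Prod.fst := (hocc i).2 h1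
    have h3 := Finset.min'_le _ _ h2
    have h4 := Finset.le_max' _ _ h2
    omega
  have hoccr : l.rowLen r < m.rowLen r := (hocc r).1 ((S.image Prod.fst).min'_mem hO)
  have hoccs : l.rowLen s < m.rowLen s := (hocc s).1 ((S.image Prod.fst).max'_mem hO)
  have cr : (r, l.rowLen r) ∈ S := mem_skewCells.2 ⟨le_refl _, hoccr⟩
  have cs : (s, l.rowLen s) ∈ S := mem_skewCells.2 ⟨le_refl _, hoccs⟩
  have hinterval : ∀ i, r ≤ i → i ≤ s → l.rowLen i < m.rowLen i := by
    intro i h1 h2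
    by_contra hc
    have hempty : ∀ i' j, (i', j) ∈ S → i' ≠ i := by
      rintro i' j hij hi'
      subst hi'
      have := mem_skewCells.1 hij
      have := hrow i'
      omega
    have hri : r < i := by have := hempty r (l.rowLen r) cr; omega
    have his : i < s := by have := hempty s (l.rowLen s) cs; omega
    have hinv : (s, l.rowLen s).1 < i := by
      refine rtg_invariant (P := fun x : ℕ × ℕ => x.1 < i) (hconn _ cr _ cs)
        (show r < i from hri) ?_
      rintro ⟨x1, x2⟩ ⟨y1, y2⟩ ⟨hxS, hyS, hadj⟩ hP
      show y1 < i
      have hxP : x1 < i := hP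
      have hyne := hempty y1 y2 hyS
      have := cellAdj_cases hadj
      omega
    have : s < i := hinv
    omega
  have hstep : ∀ i, r ≤ i → i < s → m.rowLen (i+1) = l.rowLen i + 1 := by
    intro i h1 h2
    have hup : l.rowLen i < m.rowLen i := hinterval i h1 (by omega)
    have hdn : l.rowLen (i+1) < m.rowLen (i+1) := hinterval (i+1) (by omega) (by omega)
    have hanti := l.rowLen_anti i (i+1) (by omega)
    have hanti' := m.rowLen_anti i (i+1) (by omega)
    have hge : m.rowLen (i+1) ≤ l.rowLen i + 1 := by
      by_contra hcon
      exact h22 ⟨i, l.rowLen i,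
        mem_skewCells.2 ⟨le_refl _, hup⟩,
        mem_skewCells.2 ⟨by omega, by omega⟩,
        mem_skewCells.2 ⟨by omega, by omega⟩,
        mem_skewCells.2 ⟨by omega, by omega⟩⟩
    have hle2 : l.rowLen i + 1 ≤ m.rowLen (i+1) := by
      by_contra hcon
      have c1 : (i, l.rowLen i) ∈ S := mem_skewCells.2 ⟨le_refl _, hup⟩
      have c2 : (i+1, l.rowLen (i+1)) ∈ S := mem_skewCells.2 ⟨le_refl _, hdn⟩
      have hinv : (i+1, l.rowLen (i+1)).1 ≤ i := by
        refine rtg_invariant (P := fun x : ℕ × ℕ => x.1 ≤ i) (hconn _ c1 _ c2)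
          (le_refl i) ?_
        rintro ⟨x1, x2⟩ ⟨y1, y2⟩ ⟨hxS, hyS, hadj⟩ hP
        show y1 ≤ i
        have hxP : x1 ≤ i := hP
        have hxm := mem_skewCells.1 hxS
        have hym := mem_skewCells.1 hyS
        have hcc := cellAdj_cases hadj
        -- if y1 = i+1 then x1 = i and x2 = y2, contradiction
        by_contra hy
        have hy1 : y1 = i + 1 := by omega
        have hx1 : x1 = i := by omega
        subst hy1; subst hx1
        have hx2 : x2 = y2 := by omega
        subst hx2
        omega
      have : i + 1 ≤ i := hinv
      omega
    omega
  refine ⟨r, s, ⟨hrs, fun i hi => houtside i (Or.inl hi), fun i hi => houtside i (Or.inr hi),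
    hoccr, ?_⟩⟩
  intro i hi1 hi2
  obtain ⟨k, rfl⟩ : ∃ k, i = k + 1 := ⟨i - 1, by omega⟩
  simpa using hstep k (by omega) (by omega)


lemma rowLen_eq_zero' {l : YoungDiagram} {i : ℕ} (h : l.colLen 0 ≤ i) : l.rowLen i = 0 := by
  by_contra h'
  have : (i, 0) ∈ l := YoungDiagram.mem_iff_lt_rowLen.2 (Nat.pos_of_ne_zero h')
  rw [YoungDiagram.mem_iff_lt_colLen] at this
  omega

namespace RowRibbon

variable {l m : YoungDiagram} {r s : ℕ} (h : RowRibbon l m r s)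
include h

lemma beta_eq_lo : ∀ i, i < r → beta m i = beta l i := by
  intro i hi; unfold beta; rw [h.lo i hi]

lemma beta_eq_hi : ∀ i, s < i → beta m i = beta l i := by
  intro i hi; unfold beta; rw [h.hi i hi]

lemma beta_eq_mid : ∀ i, r < i → i ≤ s → beta m i = beta l (i-1) := by
  intro i h1 h2
  unfold beta
  rw [h.step i h1 h2]
  push_cast
  omega

lemma p_lt_q : beta l s < beta m r := by
  have h1 : beta l s ≤ beta l r := by
    rcases Nat.eq_or_lt_of_le h.hrs with rfl | hlt
    · exact le_refl _
    · exact le_of_lt ((beta_strictAnti l) hlt)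
  have h2 : beta l r < beta m r := by
    unfold beta
    have := h.top
    omega
  omega

lemma q_notin : beta m r ∉ beads l := by
  rintro ⟨i, hi⟩
  rcases Nat.lt_or_ge i r with hir | hir
  · have h1 : beta m r < beta m i := (beta_strictAnti m) hir
    rw [h.beta_eq_lo i hir] at h1
    omega
  · have h1 : beta l i ≤ beta l r := by
      rcases Nat.eq_or_lt_of_le hir with rfl | hlt
      · exact le_refl _
      · exact le_of_lt ((beta_strictAnti l) hlt)
    have h2 : beta l r < beta m r := by
      unfold beta; have := h.top; omega
    omega

lemma p_in : beta l s ∈ beads l := ⟨s, rfl⟩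

lemma beads_eq : beads m = insert (beta m r) (beads l \ {beta l s}) := by
  have hql : ∀ i, r ≤ i → beta l i < beta m r := by
    intro i hi
    have h1 : beta l i ≤ beta l r := by
      rcases Nat.eq_or_lt_of_le hi with rfl | hlt
      · exact le_refl _
      · exact le_of_lt ((beta_strictAnti l) hlt)
    have h2 : beta l r < beta m r := by unfold beta; have := h.top; omega
    omega
  have hqg : ∀ i, i < r → beta m r < beta l i := by
    intro i hi
    have := (beta_strictAnti m) hi
    rwa [h.beta_eq_lo i hi] at this
  ext x
  simp only [Set.mem_insert_iff, Set.mem_diff, Set.mem_singleton_iff]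
  constructor
  · rintro ⟨i, rfl⟩
    rcases Nat.lt_trichotomy i r with hir | rfl | hir
    · right
      rw [h.beta_eq_lo i hir]
      refine ⟨⟨i, rfl⟩, ?_⟩
      have h1 := hqg i hir
      have h2 := hql s h.hrs
      omega
    · left; rfl
    · rcases le_or_gt i s with his | his
      · right
        rw [h.beta_eq_mid i hir his]
        refine ⟨⟨i-1, rfl⟩, ?_⟩
        have : beta l s < beta l (i-1) := (beta_strictAnti l) (by omega)
        omega
      · right
        rw [h.beta_eq_hi i his]
        refine ⟨⟨i, rfl⟩, ?_⟩
        have : beta l i < beta l s := (beta_strictAnti l) (by omega)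
        omega
  · rintro (rfl | ⟨⟨i, rfl⟩, hne⟩)
    · exact ⟨r, rfl⟩
    · have his : i ≠ s := fun hc => hne (by rw [hc])
      rcases Nat.lt_or_ge i r with hir | hir
      · exact ⟨i, h.beta_eq_lo i hir⟩
      · rcases Nat.lt_or_ge i s with his' | his'
        · exact ⟨i+1, by rw [h.beta_eq_mid (i+1) (by omega) (by omega)]; simp⟩
        · exact ⟨i, h.beta_eq_hi i (by omega)⟩

lemma height_rows : (skewCells l m).image Prod.fst = Finset.Icc r s := by
  ext i
  simp only [Finset.mem_image, Finset.mem_Icc]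
  constructor
  · rintro ⟨⟨i', j⟩, hij, rfl⟩
    exact h.row_range hij
  · intro ⟨h1, h2⟩
    exact ⟨(i, l.rowLen i), mem_skewCells.2 ⟨le_refl _, h.inside i h1 h2⟩, rfl⟩

lemma height_eq : skewHeight l m = s - r := by
  unfold skewHeight
  rw [h.height_rows, Nat.card_Icc]
  omega

lemma bead_count : (beads l ∩ Set.Ioo (beta l s) (beta m r)).ncard = s - r := by
  have hset : beads l ∩ Set.Ioo (beta l s) (beta m r) = beta l '' (Set.Ico r s) := by
    ext x
    simp only [Set.mem_inter_iff, Set.mem_Ioo, Set.mem_image, Set.mem_Ico, beads,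
      Set.mem_range]
    constructor
    · rintro ⟨⟨i, rfl⟩, hgt, hlt⟩
      refine ⟨i, ⟨?_, ?_⟩, rfl⟩
      · by_contra hc
        have h1 : beta m r < beta m i := (beta_strictAnti m) (by omega)
        rw [h.beta_eq_lo i (by omega)] at h1
        omega
      · have := (beta_strictAnti l).lt_iff_gt (a := s) (b := i)
        omega
    · rintro ⟨i, ⟨h1, h2⟩, rfl⟩
      refine ⟨⟨i, rfl⟩, (beta_strictAnti l) h2, ?_⟩
      have ha : beta l i ≤ beta l r := by
        rcases Nat.eq_or_lt_of_le h1 with rfl | hlt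
        · exact le_refl _
        · exact le_of_lt ((beta_strictAnti l) hlt)
      have hb : beta l r < beta m r := by unfold beta; have := h.top; omega
      omega
  rw [hset, Set.ncard_image_of_injective _ (beta_injective l), ← Finset.coe_Ico,
    Set.ncard_coe_finset, Nat.card_Ico]

end RowRibbon

lemma move_exists {l : YoungDiagram} {p q : ℤ} (hp : p ∈ beads l) (hq : q ∉ beads l)
    (hpq : p < q) :
    ∃ (m : YoungDiagram) (r s : ℕ), RowRibbon l m r s ∧ beta l s = p ∧ beta m r = q := by
  obtain ⟨srow, hs⟩ := hp
  have hex : ∃ i, beta l i < q := ⟨srow, by omega⟩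
  set rrow := Nat.find hex with hrrow
  have hfr : beta l rrow < q := Nat.find_spec hex
  have hmin : ∀ j, j < rrow → q < beta l j := by
    intro j hj
    have h1 := Nat.find_min hex hj
    have h2 : q ≠ beta l j := fun hc => hq ⟨j, hc.symm⟩
    omega
  have hrs : rrow ≤ srow := Nat.find_le (by omega)
  have hqr : 0 < q + rrow := by
    have := neg_le_beta l rrow
    omega
  have hT : (((q + rrow).toNat : ℕ) : ℤ) = q + rrow := Int.toNat_of_nonneg (by omega)
  set f : ℕ → ℕ := fun i =>
    if i < rrow then l.rowLen i
    else if i = rrow then (q + rrow).toNat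
    else if i ≤ srow then l.rowLen (i-1) + 1
    else l.rowLen i with hf_def
  have f_lo : ∀ i, i < rrow → f i = l.rowLen i := by
    intro i h; simp only [hf_def]; rw [if_pos h]
  have f_r : f rrow = (q + rrow).toNat := by
    simp [hf_def]
  have f_mid : ∀ i, rrow < i → i ≤ srow → f i = l.rowLen (i-1) + 1 := by
    intro i h1 h2; simp only [hf_def]; rw [if_neg (by omega), if_neg (by omega), if_pos h2]
  have f_hi : ∀ i, srow < i → f i = l.rowLen i := by
    intro i h1; simp only [hf_def]
    rw [if_neg (by omega), if_neg (by omega), if_neg (by omega)]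
  have hfr' : (l.rowLen rrow : ℤ) < q + rrow := by
    unfold beta at hfr; omega
  have hsucc : ∀ i, f (i+1) ≤ f i := by
    intro i
    have hanti1 := l.rowLen_anti i (i+1) (by omega)
    rcases Nat.lt_trichotomy (i+1) rrow with h1 | h1 | h1
    · rw [f_lo _ h1, f_lo _ (by omega)]; exact hanti1
    · have e1 : f (i+1) = (q+rrow).toNat := by rw [h1, f_r]
      have e2 : f i = l.rowLen i := f_lo i (by omega)
      have e3 := hmin i (by omega)
      unfold beta at e3
      omega
    · rcases Nat.eq_or_lt_of_le (show rrow ≤ i by omega) with heq | h2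
      · obtain rfl : i = rrow := heq.symm
        have e2 : f rrow = (q + rrow).toNat := f_r
        rcases le_or_gt (rrow+1) srow with h3 | h3
        · have e1 : f (rrow+1) = l.rowLen rrow + 1 := by
            rw [f_mid _ (by omega) h3]; simp
          omega
        · have e1 : f (rrow+1) = l.rowLen (rrow+1) := f_hi _ (by omega)
          have := l.rowLen_anti rrow (rrow+1) (by omega)
          omega
      · rcases le_or_gt (i+1) srow with h3 | h3
        · rw [f_mid _ h2 (by omega), f_mid _ (by omega) h3]
          have := l.rowLen_anti (i-1) (i+1-1) (by omega)
          omega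
        · rcases le_or_gt i srow with h4 | h4
          · rw [f_hi _ (by omega), f_mid _ h2 h4]
            have := l.rowLen_anti (i-1) (i+1) (by omega)
            omega
          · rw [f_hi _ (by omega), f_hi _ h4]; exact hanti1
  have hanti : ∀ i j, i ≤ j → f j ≤ f i := fun i j hij =>
    antitone_nat_of_succ_le hsucc hij
  have hN : ∀ i, l.colLen 0 + srow + 1 ≤ i → f i = 0 := by
    intro i hi
    rw [f_hi _ (by omega)]
    exact rowLen_eq_zero' (by omega)
  set m := ofRowFn f (l.colLen 0 + srow + 1) hanti hN with hm
  have hmr : ∀ i, m.rowLen i = f i := fun i => rowLen_ofRowFn _ _ _ _ i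
  have hRR : RowRibbon l m rrow srow := by
    refine ⟨hrs, ?_, ?_, ?_, ?_⟩
    · intro i hi; rw [hmr, f_lo i hi]
    · intro i hi; rw [hmr, f_hi i hi]
    · rw [hmr, f_r]; omega
    · intro i h1 h2; rw [hmr, f_mid i h1 h2]
  refine ⟨m, rrow, srow, hRR, hs, ?_⟩
  unfold beta
  rw [hmr, f_r]
  omega

lemma telescope_sum (F G : ℕ → ℤ) (r s : ℕ) (hrs : r ≤ s)
    (hstep : ∀ i, r < i → i ≤ s → F i = G (i-1)) :
    ∑ i ∈ Finset.Icc r s, (F i - G i) = F r - G s := by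
  induction s, hrs using Nat.le_induction with
  | base => rw [Finset.Icc_self, Finset.sum_singleton]
  | succ s hs ih =>
    rw [Finset.sum_Icc_succ_top (by omega), ih (fun i h1 h2 => hstep i h1 (by omega))]
    rw [hstep (s+1) (by omega) (by omega)]
    simp only [Nat.add_sub_cancel]
    ring

namespace RowRibbon

variable {l m : YoungDiagram} {r s : ℕ} (h : RowRibbon l m r s)
include h

lemma skew_biUnion : skewCells l m =
    (Finset.Icc r s).biUnion
      (fun i => (Finset.Ico (l.rowLen i) (m.rowLen i)).image fun j => (i, j)) := by
  ext ⟨i, j⟩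
  simp only [Finset.mem_biUnion, Finset.mem_Icc, Finset.mem_image, Finset.mem_Ico,
    Prod.mk.injEq, mem_skewCells]
  constructor
  · intro hij
    have := h.row_range (mem_skewCells.2 hij)
    exact ⟨i, this, j, hij, rfl, rfl⟩
  · rintro ⟨i', hi', j', hj', rfl, rfl⟩
    exact hj'
lemma card_eq : ((skewCells l m).card : ℤ) = beta m r - beta l s := by
  rw [h.skew_biUnion, Finset.card_biUnion]
  · push_cast
    have : ∀ i ∈ Finset.Icc r s,
        ((((Finset.Ico (l.rowLen i) (m.rowLen i)).image fun j => (i, j)).card : ℤ))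
          = beta m i - beta l i := by
      intro i hi
      simp only [Finset.mem_Icc] at hi
      rw [Finset.card_image_of_injective _ (fun a b hab => by simpa using congrArg Prod.snd hab),
        Nat.card_Ico]
      have := h.rowLen_le i
      unfold beta
      push_cast
      omega
    rw [Finset.sum_congr rfl this]
    exact telescope_sum (beta m) (beta l) r s h.hrs (fun i h1 h2 => h.beta_eq_mid i h1 h2)
  · intro a ha b hb hab
    simp only [Finset.disjoint_left, Finset.mem_image]
    rintro ⟨x1, x2⟩ ⟨j, hj, hx⟩ ⟨j', hj', hx'⟩
    apply hab
    rw [← hx] at hx'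
    simpa using (congrArg Prod.fst hx').symm

end RowRibbon

def MoveSpec (l m : YoungDiagram) (p q : ℤ) : Prop :=
  p < q ∧ p ∈ beads l ∧ q ∉ beads l ∧ beads m = insert q (beads l \ {p})

lemma rowRibbon_moveSpec {l m : YoungDiagram} {r s : ℕ} (h : RowRibbon l m r s) :
    MoveSpec l m (beta l s) (beta m r) :=
  ⟨h.p_lt_q, h.p_in, h.q_notin, h.beads_eq⟩

lemma moveSpec_unique {l m : YoungDiagram} {p q p' q' : ℤ}
    (h : MoveSpec l m p q) (h' : MoveSpec l m p' q') : p = p' ∧ q = q' := by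
  obtain ⟨hpq, hp, hq, hbm⟩ := h
  obtain ⟨hpq', hp', hq', hbm'⟩ := h'
  have hq1 : q ∈ beads m := by rw [hbm]; exact Set.mem_insert _ _
  have hq2 : q' = q := by
    have : q' ∈ beads m := by rw [hbm']; exact Set.mem_insert _ _
    rw [hbm] at this
    rcases this with h | ⟨h, _⟩
    · exact h
    · exact absurd h hq'
  have hp2 : p' = p := by
    have h1 : p ∉ beads m := by
      rw [hbm]
      rintro (rfl | ⟨_, hne⟩)
      · exact hq hp
      · exact hne rfl
    have h2 : p' ∉ beads m := by
      rw [hbm']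
      rintro (rfl | ⟨_, hne⟩)
      · exact hq' hp'
      · exact hne rfl
    by_contra hc
    have : p' ∈ beads m := by
      rw [hbm]
      right
      exact ⟨hp', fun hcc => hc (hcc ▸ rfl)⟩
    exact h2 this
  exact ⟨hp2.symm, hq2.symm⟩

lemma isRibbon_of_moveSpec {l m : YoungDiagram} {p q : ℤ} (h : MoveSpec l m p q) :
    IsRibbon l m ∧ ((skewCells l m).card : ℤ) = q - p ∧
      skewHeight l m = (beads l ∩ Set.Ioo p q).ncard := by
  obtain ⟨hpq, hp, hq, hbm⟩ := h
  obtain ⟨m', r, s, hRR, hbls, hbmr⟩ := move_exists hp hq hpq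
  have : beads m' = beads m := by
    rw [hRR.beads_eq, hbls, hbmr, hbm]
  have hmm : m' = m := beads_inj this
  subst hmm
  refine ⟨hRR.isRibbon, ?_, ?_⟩
  · rw [hRR.card_eq, hbls, hbmr]
  · rw [hRR.height_eq, ← hbls, ← hbmr, hRR.bead_count]

lemma isRibbon_moveSpec {l m : YoungDiagram} (h : IsRibbon l m) :
    ∃ p q, MoveSpec l m p q := by
  obtain ⟨r, s, hRR⟩ := isRibbon_rowRibbon h
  exact ⟨_, _, rowRibbon_moveSpec hRR⟩

lemma moveSpec_exists_diagram {l : YoungDiagram} {p q : ℤ} (hp : p ∈ beads l)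
    (hq : q ∉ beads l) (hpq : p < q) : ∃ m, MoveSpec l m p q := by
  obtain ⟨m, r, s, hRR, h1, h2⟩ := move_exists hp hq hpq
  exact ⟨m, by rw [← h1, ← h2]; exact rowRibbon_moveSpec hRR⟩

def nb (B : Set ℤ) (p q : ℤ) : ℕ := (B ∩ Set.Ioo p q).ncard

lemma nb_fin (B : Set ℤ) (p q : ℤ) : (B ∩ Set.Ioo p q).Finite :=
  (Set.finite_Ioo p q).inter_of_right B

lemma nb_congr {A B : Set ℤ} {p q : ℤ} (h : ∀ x, p < x → x < q → (x ∈ A ↔ x ∈ B)) :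
    nb A p q = nb B p q := by
  unfold nb
  congr 1
  ext y
  simp only [Set.mem_inter_iff, Set.mem_Ioo]
  constructor
  · rintro ⟨h1, h2⟩; exact ⟨(h y h2.1 h2.2).1 h1, h2⟩
  · rintro ⟨h1, h2⟩; exact ⟨(h y h2.1 h2.2).2 h1, h2⟩

lemma nb_insert {B : Set ℤ} {x p q : ℤ} (hx : x ∉ B) :
    nb (insert x B) p q = nb B p q + (if x ∈ Set.Ioo p q then 1 else 0) := by
  unfold nb
  split_ifs with h
  · have hset : insert x B ∩ Set.Ioo p q = insert x (B ∩ Set.Ioo p q) := by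
      ext y
      simp only [Set.mem_inter_iff, Set.mem_insert_iff]
      constructor
      · rintro ⟨rfl | h1, h2⟩
        · exact Or.inl rfl
        · exact Or.inr ⟨h1, h2⟩
      · rintro (rfl | ⟨h1, h2⟩)
        · exact ⟨Or.inl rfl, h⟩
        · exact ⟨Or.inr h1, h2⟩
    rw [hset, Set.ncard_insert_of_notMem (by simp [hx]) (nb_fin B p q)]
  · have hset : insert x B ∩ Set.Ioo p q = B ∩ Set.Ioo p q := by
      ext y
      simp only [Set.mem_inter_iff, Set.mem_insert_iff]
      constructor
      · rintro ⟨rfl | h1, h2⟩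
        · exact absurd h2 h
        · exact ⟨h1, h2⟩
      · rintro ⟨h1, h2⟩
        exact ⟨Or.inr h1, h2⟩
    rw [hset]
    omega

lemma nb_diff {B : Set ℤ} {x p q : ℤ} (hx : x ∈ B) :
    nb B p q = nb (B \ {x}) p q + (if x ∈ Set.Ioo p q then 1 else 0) := by
  have h1 : x ∉ B \ {x} := by simp
  have h2 : insert x (B \ {x}) = B := by
    ext y
    simp only [Set.mem_insert_iff, Set.mem_diff, Set.mem_singleton_iff]
    constructor
    · rintro (rfl | ⟨h, _⟩) <;> [exact hx; exact h]
    · intro hy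
      by_cases hxy : y = x
      · exact Or.inl hxy
      · exact Or.inr ⟨hy, hxy⟩
  conv_lhs => rw [← h2]
  exact nb_insert h1

lemma nb_split {B : Set ℤ} {p x q : ℤ} (h1 : p < x) (h2 : x < q) :
    nb B p q = nb B p x + nb B x q + (if x ∈ B then 1 else 0) := by
  unfold nb
  have hset : B ∩ Set.Ioo p q = (B ∩ Set.Ioo p x) ∪ ((B ∩ Set.Ioo x q) ∪ (B ∩ ({x} ∩ Set.Ioo p q))) := by
    ext y
    simp only [Set.mem_inter_iff, Set.mem_union, Set.mem_Ioo, Set.mem_singleton_iff]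
    constructor
    · rintro ⟨hy, hy1, hy2⟩
      rcases lt_trichotomy y x with hh | rfl | hh
      · exact Or.inl ⟨hy, hy1, hh⟩
      · exact Or.inr (Or.inr ⟨hy, rfl, hy1, hy2⟩)
      · exact Or.inr (Or.inl ⟨hy, hh, hy2⟩)
    · rintro (⟨hy, hy1, hy2⟩ | ⟨hy, hy1, hy2⟩ | ⟨hy, rfl, hy2⟩)
      · exact ⟨hy, hy1, by omega⟩
      · exact ⟨hy, by omega, hy2⟩
      · exact ⟨hy, hy2⟩
  have hfin2 : ((B ∩ Set.Ioo x q) ∪ (B ∩ ({x} ∩ Set.Ioo p q))).Finite :=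
    (nb_fin B x q).union (((Set.finite_singleton x).inter_of_left _).inter_of_right B)
  rw [hset, Set.ncard_union_eq ?d1 (nb_fin B p x) hfin2,
    Set.ncard_union_eq ?d2 (nb_fin B x q)
      (((Set.finite_singleton x).inter_of_left _).inter_of_right B)]
  case d1 =>
    simp only [Set.disjoint_left, Set.mem_inter_iff, Set.mem_union, Set.mem_Ioo,
      Set.mem_singleton_iff]
    rintro y ⟨hy, hy1, hy2⟩
    rintro (⟨_, hz1, _⟩ | ⟨_, rfl, _⟩) <;> omega
  case d2 =>
    simp only [Set.disjoint_left, Set.mem_inter_iff, Set.mem_Ioo, Set.mem_singleton_iff]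
    rintro y ⟨hy, hy1, hy2⟩ ⟨_, rfl, _⟩
    omega
  have hone : (B ∩ ({x} ∩ Set.Ioo p q)).ncard = if x ∈ B then 1 else 0 := by
    split_ifs with hxB
    · have : B ∩ ({x} ∩ Set.Ioo p q) = {x} := by
        ext y
        simp only [Set.mem_inter_iff, Set.mem_singleton_iff, Set.mem_Ioo]
        constructor
        · rintro ⟨_, rfl, _⟩; rfl
        · rintro rfl; exact ⟨hxB, rfl, h1, h2⟩
      rw [this, Set.ncard_singleton]
    · have : B ∩ ({x} ∩ Set.Ioo p q) = ∅ := by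
        ext y
        simp only [Set.mem_inter_iff, Set.mem_singleton_iff, Set.mem_Ioo, Set.mem_empty_iff_false,
          iff_false]
        rintro ⟨hyB, rfl, _⟩
        exact hxB hyB
      rw [this, Set.ncard_empty]
  omega

lemma crossing_parity {p q r s : ℤ} (hpq : p < q) (hrs : r < s)
    (h1 : p ≠ r) (h2 : p ≠ s) (h3 : q ≠ r) (h4 : q ≠ s) :
    ((if r ∈ Set.Ioo p q then 1 else 0) + (if s ∈ Set.Ioo p q then 1 else 0)
      + (if p ∈ Set.Ioo r s then 1 else 0) + (if q ∈ Set.Ioo r s then 1 else 0)) % 2 = 0 := by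
  simp only [Set.mem_Ioo]
  split_ifs <;> omega

lemma neg_one_pow_parity {m n : ℕ} (h : m % 2 = n % 2) : ((-1 : ℤ))^m = (-1)^n := by
  rcases Nat.even_or_odd m with he | ho
  · have he' : Even n := by rw [Nat.even_iff] at he ⊢; omega
    rw [he.neg_one_pow, he'.neg_one_pow]
  · have ho' : Odd n := by rw [Nat.odd_iff] at ho ⊢; omega
    rw [ho.neg_one_pow, ho'.neg_one_pow]

lemma ind_zero {x p q : ℤ} (h : x ≤ p ∨ q ≤ x) :
    (if x ∈ Set.Ioo p q then 1 else 0) = 0 := by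
  rw [if_neg]
  rw [Set.mem_Ioo]
  omega

lemma singleton_eq_singleton {a b : ℤ} (h : ({a} : Set ℤ) = {b}) : a = b := by
  have := (Set.ext_iff.1 h a).1 rfl
  simpa using this

lemma pair_eq_singleton {a b c : ℤ} (h : ({a, b} : Set ℤ) = {c}) : a = c ∧ b = c := by
  have h1 := (Set.ext_iff.1 h a).1 (by simp)
  have h2 := (Set.ext_iff.1 h b).1 (by simp)
  simp at h1 h2
  exact ⟨h1, h2⟩

lemma pair_eq_pair {a b c d : ℤ} (h : ({a, b} : Set ℤ) = {c, d}) :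
    (a = c ∨ a = d) ∧ (b = c ∨ b = d) ∧ (c = a ∨ c = b) ∧ (d = a ∨ d = b) := by
  have h1 := (Set.ext_iff.1 h a).1 (by simp)
  have h2 := (Set.ext_iff.1 h b).1 (by simp)
  have h3 := (Set.ext_iff.1 h c).2 (by simp)
  have h4 := (Set.ext_iff.1 h d).2 (by simp)
  simp at h1 h2 h3 h4
  exact ⟨h1, h2, by omega, by omega⟩

lemma skewSign_ne_zero (l m : YoungDiagram) : skewSign l m ≠ 0 :=
  pow_ne_zero _ (by norm_num)

lemma sign_eq_of_parity {h1 h2 h3 h4 : ℕ} (h : (h1 + h2) % 2 = (h3 + h4) % 2) :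
    ((-1 : ℤ))^h1 * (-1)^h2 = (-1)^h3 * (-1)^h4 := by
  rw [← pow_add, ← pow_add]
  exact neg_one_pow_parity h

lemma sign_neg_of_parity {h1 h2 h3 h4 : ℕ} (h : (h1 + h2) % 2 ≠ (h3 + h4) % 2) :
    ((-1 : ℤ))^h1 * (-1)^h2 = -((-1)^h3 * (-1)^h4) := by
  rw [← pow_add, ← pow_add]
  have he : (h1 + h2) % 2 = (h3 + h4 + 1) % 2 := by omega
  rw [neg_one_pow_parity he, pow_succ]
  ring

lemma diff_sets_one {B : Set ℤ} {p s : ℤ} (hpB : p ∈ B) (hsB : s ∉ B) :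
    B \ insert s (B \ {p}) = {p} ∧ insert s (B \ {p}) \ B = {s} := by
  constructor
  · ext x
    simp only [Set.mem_diff, Set.mem_insert_iff, Set.mem_singleton_iff]
    constructor
    · rintro ⟨hxB, hx⟩
      push_neg at hx
      exact hx.2 hxB
    · rintro rfl
      refine ⟨hpB, ?_⟩
      push_neg
      constructor
      · rintro rfl; exact hsB hpB
      · intro _; rfl
  · ext x
    simp only [Set.mem_diff, Set.mem_insert_iff, Set.mem_singleton_iff]
    constructor
    · rintro ⟨rfl | ⟨hxB, _⟩, hx⟩
      · rfl
      · exact absurd hxB hx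
    · rintro rfl
      exact ⟨Or.inl rfl, hsB⟩

lemma diff_sets_two {B : Set ℤ} {p q r s : ℤ} (hpB : p ∈ B) (hrB : r ∈ B)
    (hqB : q ∉ B) (hsB : s ∉ B) (hpr : p ≠ r) (hqs : q ≠ s) :
    B \ insert s (insert q (B \ {p}) \ {r}) = {p, r} ∧
    insert s (insert q (B \ {p}) \ {r}) \ B = {q, s} := by
  have hps : p ≠ s := fun h => hsB (h ▸ hpB)
  have hpq : p ≠ q := fun h => hqB (h ▸ hpB)
  have hrs : r ≠ s := fun h => hsB (h ▸ hrB)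
  have hrq : r ≠ q := fun h => hqB (h ▸ hrB)
  constructor
  · ext x
    simp only [Set.mem_diff, Set.mem_insert_iff, Set.mem_singleton_iff]
    constructor
    · rintro ⟨hxB, hx⟩
      push_neg at hx
      obtain ⟨hx1, hx2⟩ := hx
      by_cases hxp : x = p
      · exact Or.inl hxp
      · right
        by_contra hxr
        exact hxr ((hx2 (Or.inr ⟨hxB, hxp⟩)))
    · rintro (rfl | rfl)
      · refine ⟨hpB, ?_⟩
        push_neg
        refine ⟨hps, ?_⟩
        rintro (rfl | ⟨_, hne⟩)
        · exact absurd rfl hpq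
        · exact absurd rfl hne
      · refine ⟨hrB, ?_⟩
        push_neg
        refine ⟨hrs, ?_⟩
        intro _; rfl
  · ext x
    simp only [Set.mem_diff, Set.mem_insert_iff, Set.mem_singleton_iff]
    constructor
    · rintro ⟨rfl | ⟨rfl | ⟨hxB, _⟩, _⟩, hx⟩
      · exact Or.inr rfl
      · exact Or.inl rfl
      · exact absurd hxB hx
    · rintro (rfl | rfl)
      · exact ⟨Or.inr ⟨Or.inl rfl, Ne.symm hrq⟩, hqB⟩
      · exact ⟨Or.inl rfl, hsB⟩

lemma spec_props {l m : YoungDiagram} {p q : ℤ} (h : MoveSpec l m p q) :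
    IsRibbon l m ∧ ((skewCells l m).card : ℤ) = q - p ∧
      skewHeight l m = nb (beads l) p q :=
  isRibbon_of_moveSpec h

lemma insert_diff_swap {B : Set ℤ} {a b c : ℤ} (haB : a ∈ B) (hbB : b ∉ B) (hcB : c ∈ B)
    (hac : a ≠ c) :
    insert a ((insert b (B \ {a})) \ {c}) = insert b (B \ {c}) := by
  have hbc : b ≠ c := fun h => hbB (h ▸ hcB)
  have hab : a ≠ b := fun h => hbB (h ▸ haB)
  ext x
  simp only [Set.mem_insert_iff, Set.mem_diff, Set.mem_singleton_iff]
  constructor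
  · rintro (rfl | ⟨rfl | ⟨hxB, hxa⟩, hxc⟩)
    · exact Or.inr ⟨haB, hac⟩
    · exact Or.inl rfl
    · exact Or.inr ⟨hxB, hxc⟩
  · rintro (rfl | ⟨hxB, hxc⟩)
    · exact Or.inr ⟨Or.inl rfl, hbc⟩
    · by_cases hxa : x = a
      · exact Or.inl hxa
      · exact Or.inr ⟨Or.inr ⟨hxB, hxa⟩, hxc⟩

lemma insert_diff_comm {B : Set ℤ} {p q r s : ℤ} (hpB : p ∈ B) (hrB : r ∈ B)
    (hqB : q ∉ B) (hsB : s ∉ B) (hpr : p ≠ r) :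
    insert s ((insert q (B \ {p})) \ {r}) = insert q ((insert s (B \ {r})) \ {p}) := by
  have hqr : q ≠ r := fun h => hqB (h ▸ hrB)
  have hsp : s ≠ p := fun h => hsB (h ▸ hpB)
  have hsr : s ≠ r := fun h => hsB (h ▸ hrB)
  have hqp : q ≠ p := fun h => hqB (h ▸ hpB)
  ext x
  simp only [Set.mem_insert_iff, Set.mem_diff, Set.mem_singleton_iff]
  constructor
  · rintro (rfl | ⟨rfl | ⟨hxB, hxp⟩, hxr⟩)
    · exact Or.inr ⟨Or.inl rfl, hsp⟩
    · exact Or.inl rfl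
    · exact Or.inr ⟨Or.inr ⟨hxB, hxr⟩, hxp⟩
  · rintro (rfl | ⟨rfl | ⟨hxB, hxr⟩, hxp⟩)
    · exact Or.inr ⟨Or.inl rfl, hqr⟩
    · exact Or.inl rfl
    · exact Or.inr ⟨Or.inr ⟨hxB, hxp⟩, hxr⟩

lemma candidate_cases {lam muh xi : YoungDiagram} {p' q' r' s' : ℤ}
    (s1 : MoveSpec lam muh p' q') (s2 : MoveSpec muh xi r' s') :
    (r' = q' ∧ s' ∉ beads lam ∧ beads xi = insert s' (beads lam \ {p'})) ∨
    (s' = p' ∧ r' ∈ beads lam ∧ beads xi = insert q' (beads lam \ {r'})) ∨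
    (r' ≠ q' ∧ s' ≠ p' ∧ r' ∈ beads lam ∧ s' ∉ beads lam ∧ p' ≠ r' ∧ q' ≠ s' ∧
      beads xi = insert s' ((insert q' (beads lam \ {p'})) \ {r'})) := by
  obtain ⟨hpq', hpB', hqB', hM'⟩ := s1
  obtain ⟨hrs', hrM', hsM', hX'⟩ := s2
  rw [hM'] at hrM' hsM' hX'
  have hsq' : s' ≠ q' := by
    rintro rfl
    exact hsM' (Or.inl rfl)
  have hrp' : r' ≠ p' := by
    rintro rfl
    rcases Set.mem_insert_iff.1 hrM' with h | h
    · omega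
    · exact h.2 rfl
  by_cases hrq' : r' = q'
  · subst hrq'
    have hsp' : s' ≠ p' := by omega
    have hsB' : s' ∉ beads lam := by
      intro hc
      exact hsM' (Or.inr ⟨hc, hsp'⟩)
    refine Or.inl ⟨rfl, hsB', ?_⟩
    rw [hX', Set.insert_diff_self_of_notMem]
    rintro ⟨hc, -⟩
    exact hqB' hc
  · by_cases hsp' : s' = p'
    · have hrB' : r' ∈ beads lam := by
        rcases Set.mem_insert_iff.1 hrM' with h | h
        · exact absurd h hrq'
        · exact h.1
      refine Or.inr (Or.inl ⟨hsp', hrB', ?_⟩)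
      rw [hX', hsp']
      exact insert_diff_swap hpB' hqB' hrB' (Ne.symm hrp')
    · have hrB' : r' ∈ beads lam := by
        rcases Set.mem_insert_iff.1 hrM' with h | h
        · exact absurd h hrq'
        · exact h.1
      have hsB' : s' ∉ beads lam := by
        intro hc
        exact hsM' (Or.inr ⟨hc, hsp'⟩)
      have hqs' : q' ≠ s' := Ne.symm hsq'
      exact Or.inr (Or.inr ⟨hrq', hsp', hrB', hsB', Ne.symm hrp', hqs', hX'⟩)

/-- Local rule for ribbons: given nonempty ribbons `μ/λ` and `ξ/μ`, exactly one
of the following occurs: either there is `ν` with `ν/λ`, `ξ/ν` ribbons of the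
swapped sizes and the same sign product, or there is `μ̂ ≠ μ` with `μ̂/λ`, `ξ/μ̂`
ribbons of the same sizes and the opposite sign product. -/
theorem stmt18 (lam mu xi : YoungDiagram)
    (h1 : IsRibbon lam mu) (h2 : IsRibbon mu xi) :
    Xor'
      (∃ nu : YoungDiagram, lam ≤ nu ∧ nu ≤ xi ∧
        IsRibbon lam nu ∧ IsRibbon nu xi ∧
        (skewCells lam nu).card = (skewCells mu xi).card ∧
        (skewCells nu xi).card = (skewCells lam mu).card ∧
        skewSign lam nu * skewSign nu xi = skewSign lam mu * skewSign mu xi)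
      (∃ muh : YoungDiagram, muh ≠ mu ∧ lam ≤ muh ∧ muh ≤ xi ∧
        IsRibbon lam muh ∧ IsRibbon muh xi ∧
        (skewCells lam muh).card = (skewCells lam mu).card ∧
        (skewCells muh xi).card = (skewCells mu xi).card ∧
        skewSign lam muh * skewSign muh xi
          = -(skewSign lam mu * skewSign mu xi)) := by
  obtain ⟨p, q, spec1⟩ := isRibbon_moveSpec h1
  obtain ⟨r, s, spec2⟩ := isRibbon_moveSpec h2
  obtain ⟨-, card1, hgt1⟩ := spec_props spec1
  obtain ⟨-, card2, hgt2⟩ := spec_props spec2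
  obtain ⟨hpq, hpB, hqB, hM⟩ := spec1
  obtain ⟨hrs, hrM, hsM, hX⟩ := spec2
  rw [hM] at hgt2 hrM hsM hX
  have hrp : r ≠ p := by
    rintro rfl
    rcases Set.mem_insert_iff.1 hrM with h | h
    · omega
    · exact h.2 rfl
  have hsq : s ≠ q := by
    rintro rfl
    exact hsM (Or.inl rfl)
  by_cases hrq : r = q
  · -- CASE II : r = q
    have h' : q = r := hrq.symm
    subst h'
    have hsp : s ≠ p := by omega
    have hsB : s ∉ beads lam := fun hc => hsM (Or.inr ⟨hc, hsp⟩)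
    have hXf : beads xi = insert s (beads lam \ {p}) := by
      rw [hX, Set.insert_diff_self_of_notMem (by rintro ⟨h, -⟩; exact hqB h)]
    set t : ℤ := p + s - q with ht
    have hpt : p < t := by omega
    have hts : t < s := by omega
    have hq0 : (if q ∈ Set.Ioo q s then 1 else 0) = 0 := ind_zero (Or.inl (le_refl q))
    have hp0 : (if p ∈ Set.Ioo q s then 1 else 0) = 0 := ind_zero (Or.inl (by omega))
    have eM : nb (insert q (beads lam \ {p})) q s
        = nb (beads lam \ {p}) q s + (if q ∈ Set.Ioo q s then 1 else 0) :=
      nb_insert (by rintro ⟨h, -⟩; exact hqB h)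
    have eB : nb (beads lam) q s
        = nb (beads lam \ {p}) q s + (if p ∈ Set.Ioo q s then 1 else 0) := nb_diff hpB
    have esplit : nb (beads lam) p s
        = nb (beads lam) p q + nb (beads lam) q s + (if q ∈ beads lam then 1 else 0) :=
      nb_split hpq (by omega)
    have eq0 : (if q ∈ beads lam then 1 else 0) = 0 := if_neg hqB
    have ht0 : (if t ∈ Set.Ioo p t then 1 else 0) = 0 := ind_zero (Or.inr (le_refl t))
    have hs0 : (if s ∈ Set.Ioo p t then 1 else 0) = 0 := ind_zero (Or.inr (by omega))
    have ht0' : (if t ∈ Set.Ioo t s then 1 else 0) = 0 := ind_zero (Or.inl (le_refl t))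
    have hp0' : (if p ∈ Set.Ioo t s then 1 else 0) = 0 := ind_zero (Or.inl (by omega))
    have esplit2 : nb (beads lam) p s
        = nb (beads lam) p t + nb (beads lam) t s + (if t ∈ beads lam then 1 else 0) :=
      nb_split hpt hts
    by_cases htB : t ∈ beads lam
    · -- II-b : branch 2 holds
      obtain ⟨muh, specm1⟩ := moveSpec_exists_diagram htB hsB hts
      obtain ⟨hRm1, cardm1, hgtm1⟩ := spec_props specm1
      have hW : beads muh = insert s (beads lam \ {t}) := specm1.2.2.2
      have htp : t ≠ p := by omega
      have specm2 : MoveSpec muh xi p t := by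
        refine ⟨hpt, ?_, ?_, ?_⟩
        · rw [hW]; exact Or.inr ⟨hpB, Ne.symm htp⟩
        · rw [hW]
          rintro (h | ⟨-, hnt⟩)
          · omega
          · exact hnt rfl
        · rw [hXf, hW]
          exact (insert_diff_swap htB hsB hpB htp).symm
      obtain ⟨hRm2, cardm2, hgtm2⟩ := spec_props specm2
      rw [hW] at hgtm2
      have hne : muh ≠ mu := by
        intro hc
        have hbe : beads muh = beads mu := by rw [hc]
        rw [hW, hM] at hbe
        have hqmem : q ∈ insert q (beads lam \ {p}) := Or.inl rfl
        rw [← hbe] at hqmem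
        rcases hqmem with h | ⟨h, -⟩
        · exact hsq h.symm
        · exact hqB h
      have eW : nb (insert s (beads lam \ {t})) p t
          = nb (beads lam \ {t}) p t + (if s ∈ Set.Ioo p t then 1 else 0) :=
        nb_insert (by rintro ⟨h, -⟩; exact hsB h)
      have eB2 : nb (beads lam) p t
          = nb (beads lam \ {t}) p t + (if t ∈ Set.Ioo p t then 1 else 0) := nb_diff htB
      have et1 : (if t ∈ beads lam then 1 else 0) = 1 := if_pos htB
      have hsig : skewSign lam muh * skewSign muh xi
          = -(skewSign lam mu * skewSign mu xi) := by
        unfold skewSign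
        rw [hgtm1, hgtm2, hgt1, hgt2]
        exact sign_neg_of_parity (by omega)
      refine Or.inr ⟨⟨muh, hne, hRm1.1, hRm2.1, hRm1, hRm2, by omega, by omega, hsig⟩, ?_⟩
      rintro ⟨nu, -, -, hRn1, hRn2, hcard1, hcard2, -⟩
      obtain ⟨p', q', specn1⟩ := isRibbon_moveSpec hRn1
      obtain ⟨r', s', specn2⟩ := isRibbon_moveSpec hRn2
      obtain ⟨-, cardn1, -⟩ := spec_props specn1
      obtain ⟨-, cardn2, -⟩ := spec_props specn2
      have hsz1 : q' - p' = s - q := by omega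
      have hsz2 : s' - r' = q - p := by omega
      have hd1 : beads lam \ beads xi = {p} := by
        rw [hXf]; exact (diff_sets_one hpB hsB).1
      have hd2 : beads xi \ beads lam = {s} := by
        rw [hXf]; exact (diff_sets_one hpB hsB).2
      rcases candidate_cases specn1 specn2 with
        ⟨-, hs'B, hXc⟩ | ⟨hs'p', hr'B, hXc⟩ | ⟨-, -, hr'B, hs'B, hp'r', hq's', hXc⟩
      · have eA : beads lam \ beads xi = {p'} := by
          rw [hXc]; exact (diff_sets_one specn1.2.1 hs'B).1
        have ep : p' = p := singleton_eq_singleton (eA.symm.trans hd1)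
        have : q' = t := by omega
        exact specn1.2.2.1 (this ▸ htB)
      · have eA : beads lam \ beads xi = {r'} := by
          rw [hXc]; exact (diff_sets_one hr'B specn1.2.2.1).1
        have eS : beads xi \ beads lam = {q'} := by
          rw [hXc]; exact (diff_sets_one hr'B specn1.2.2.1).2
        have er : r' = p := singleton_eq_singleton (eA.symm.trans hd1)
        have eq' : q' = s := singleton_eq_singleton (eS.symm.trans hd2)
        have : p' = q := by omega
        exact hqB (this ▸ specn1.2.1)
      · have eA : beads lam \ beads xi = {p', r'} := by
          rw [hXc]
          exact (diff_sets_two specn1.2.1 hr'B specn1.2.2.1 hs'B hp'r' hq's').1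
        have := pair_eq_singleton (eA.symm.trans hd1)
        omega
    · -- II-a : branch 1 holds
      obtain ⟨nu, specn1⟩ := moveSpec_exists_diagram hpB htB hpt
      obtain ⟨hRn1, cardn1, hgtn1⟩ := spec_props specn1
      have hV : beads nu = insert t (beads lam \ {p}) := specn1.2.2.2
      have specn2 : MoveSpec nu xi t s := by
        refine ⟨hts, ?_, ?_, ?_⟩
        · rw [hV]; exact Or.inl rfl
        · rw [hV]
          rintro (h | ⟨h, -⟩)
          · omega
          · exact hsB h
        · rw [hXf, hV, Set.insert_diff_self_of_notMem (by rintro ⟨h, -⟩; exact htB h)]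
      obtain ⟨hRn2, cardn2, hgtn2⟩ := spec_props specn2
      rw [hV] at hgtn2
      have eV : nb (insert t (beads lam \ {p})) t s
          = nb (beads lam \ {p}) t s + (if t ∈ Set.Ioo t s then 1 else 0) :=
        nb_insert (by rintro ⟨h, -⟩; exact htB h)
      have eB3 : nb (beads lam) t s
          = nb (beads lam \ {p}) t s + (if p ∈ Set.Ioo t s then 1 else 0) := nb_diff hpB
      have et0 : (if t ∈ beads lam then 1 else 0) = 0 := if_neg htB
      have hsig : skewSign lam nu * skewSign nu xi
          = skewSign lam mu * skewSign mu xi := by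
        unfold skewSign
        rw [hgtn1, hgtn2, hgt1, hgt2]
        exact sign_eq_of_parity (by omega)
      refine Or.inl ⟨⟨nu, hRn1.1, hRn2.1, hRn1, hRn2, by omega, by omega, hsig⟩, ?_⟩
      rintro ⟨muh, hne, -, -, hRm1, hRm2, hcard1, hcard2, -⟩
      obtain ⟨p', q', specm1⟩ := isRibbon_moveSpec hRm1
      obtain ⟨r', s', specm2⟩ := isRibbon_moveSpec hRm2
      obtain ⟨-, cardm1, -⟩ := spec_props specm1
      obtain ⟨-, cardm2, -⟩ := spec_props specm2
      have hsz1 : q' - p' = q - p := by omega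
      have hsz2 : s' - r' = s - q := by omega
      have hd1 : beads lam \ beads xi = {p} := by
        rw [hXf]; exact (diff_sets_one hpB hsB).1
      have hd2 : beads xi \ beads lam = {s} := by
        rw [hXf]; exact (diff_sets_one hpB hsB).2
      rcases candidate_cases specm1 specm2 with
        ⟨hr'q', hs'B, hXc⟩ | ⟨hs'p', hr'B, hXc⟩ | ⟨-, -, hr'B, hs'B, hp'r', hq's', hXc⟩
      · have eA : beads lam \ beads xi = {p'} := by
          rw [hXc]; exact (diff_sets_one specm1.2.1 hs'B).1
        have ep : p' = p := singleton_eq_singleton (eA.symm.trans hd1)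
        have eq' : q' = q := by omega
        have hbe : beads muh = beads mu := by
          rw [specm1.2.2.2, hM, ep, eq']
        exact hne (beads_inj hbe)
      · have eA : beads lam \ beads xi = {r'} := by
          rw [hXc]; exact (diff_sets_one hr'B specm1.2.2.1).1
        have er : r' = p := singleton_eq_singleton (eA.symm.trans hd1)
        have : p' = t := by omega
        exact htB (this ▸ specm1.2.1)
      · have eA : beads lam \ beads xi = {p', r'} := by
          rw [hXc]
          exact (diff_sets_two specm1.2.1 hr'B specm1.2.2.1 hs'B hp'r' hq's').1
        have := pair_eq_singleton (eA.symm.trans hd1)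
        omega
  · by_cases hsp : s = p
    · -- CASE III : s = p
      subst hsp
      have hrB : r ∈ beads lam := by
        rcases Set.mem_insert_iff.1 hrM with h | h
        · exact absurd h hrq
        · exact h.1
      have hXf : beads xi = insert q (beads lam \ {r}) := by
        rw [hX]
        exact insert_diff_swap hpB hqB hrB (by omega)
      set t : ℤ := r + q - s with ht
      have hrt : r < t := by omega
      have htq : t < q := by omega
      have hq0 : (if q ∈ Set.Ioo r s then 1 else 0) = 0 := ind_zero (Or.inr (by omega))
      have hs0 : (if s ∈ Set.Ioo r s then 1 else 0) = 0 := ind_zero (Or.inr (le_refl s))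
      have eM : nb (insert q (beads lam \ {s})) r s
          = nb (beads lam \ {s}) r s + (if q ∈ Set.Ioo r s then 1 else 0) :=
        nb_insert (by rintro ⟨h, -⟩; exact hqB h)
      have eB : nb (beads lam) r s
          = nb (beads lam \ {s}) r s + (if s ∈ Set.Ioo r s then 1 else 0) := nb_diff hpB
      have esplit : nb (beads lam) r q
          = nb (beads lam) r s + nb (beads lam) s q + (if s ∈ beads lam then 1 else 0) :=
        nb_split hrs hpq
      have es1 : (if s ∈ beads lam then 1 else 0) = 1 := if_pos hpB
      have hq0' : (if q ∈ Set.Ioo r t then 1 else 0) = 0 := ind_zero (Or.inr (by omega))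
      have ht0 : (if t ∈ Set.Ioo r t then 1 else 0) = 0 := ind_zero (Or.inr (le_refl t))
      have ht0' : (if t ∈ Set.Ioo t q then 1 else 0) = 0 := ind_zero (Or.inl (le_refl t))
      have hr0 : (if r ∈ Set.Ioo t q then 1 else 0) = 0 := ind_zero (Or.inl (by omega))
      have esplit2 : nb (beads lam) r q
          = nb (beads lam) r t + nb (beads lam) t q + (if t ∈ beads lam then 1 else 0) :=
        nb_split hrt htq
      by_cases htB : t ∈ beads lam
      · -- III-a : branch 1 holds
        obtain ⟨nu, specn1⟩ := moveSpec_exists_diagram htB hqB htq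
        obtain ⟨hRn1, cardn1, hgtn1⟩ := spec_props specn1
        have hV : beads nu = insert q (beads lam \ {t}) := specn1.2.2.2
        have specn2 : MoveSpec nu xi r t := by
          refine ⟨hrt, ?_, ?_, ?_⟩
          · rw [hV]
            refine Or.inr ⟨hrB, ?_⟩
            simp only [Set.mem_singleton_iff]
            omega
          · rw [hV]
            rintro (h | ⟨-, hnt⟩)
            · omega
            · exact hnt rfl
          · rw [hXf, hV]
            exact (insert_diff_swap htB hqB hrB (by omega)).symm
        obtain ⟨hRn2, cardn2, hgtn2⟩ := spec_props specn2
        rw [hV] at hgtn2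
        have eV : nb (insert q (beads lam \ {t})) r t
            = nb (beads lam \ {t}) r t + (if q ∈ Set.Ioo r t then 1 else 0) :=
          nb_insert (by rintro ⟨h, -⟩; exact hqB h)
        have eB2 : nb (beads lam) r t
            = nb (beads lam \ {t}) r t + (if t ∈ Set.Ioo r t then 1 else 0) := nb_diff htB
        have et1 : (if t ∈ beads lam then 1 else 0) = 1 := if_pos htB
        have hsig : skewSign lam nu * skewSign nu xi
            = skewSign lam mu * skewSign mu xi := by
          unfold skewSign
          rw [hgtn1, hgtn2, hgt1, hgt2]
          exact sign_eq_of_parity (by omega)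
        refine Or.inl ⟨⟨nu, hRn1.1, hRn2.1, hRn1, hRn2, by omega, by omega, hsig⟩, ?_⟩
        rintro ⟨muh, hne, -, -, hRm1, hRm2, hcard1, hcard2, -⟩
        obtain ⟨p', q', specm1⟩ := isRibbon_moveSpec hRm1
        obtain ⟨r', s', specm2⟩ := isRibbon_moveSpec hRm2
        obtain ⟨-, cardm1, -⟩ := spec_props specm1
        obtain ⟨-, cardm2, -⟩ := spec_props specm2
        have hsz1 : q' - p' = q - s := by omega
        have hsz2 : s' - r' = s - r := by omega
        have hd1 : beads lam \ beads xi = {r} := by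
          rw [hXf]; exact (diff_sets_one hrB hqB).1
        have hd2 : beads xi \ beads lam = {q} := by
          rw [hXf]; exact (diff_sets_one hrB hqB).2
        rcases candidate_cases specm1 specm2 with
          ⟨-, hs'B, hXc⟩ | ⟨hs'p', hr'B, hXc⟩ | ⟨-, -, hr'B, hs'B, hp'r', hq's', hXc⟩
        · have eA : beads lam \ beads xi = {p'} := by
            rw [hXc]; exact (diff_sets_one specm1.2.1 hs'B).1
          have ep : p' = r := singleton_eq_singleton (eA.symm.trans hd1)
          have : q' = t := by omega
          exact specm1.2.2.1 (this ▸ htB)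
        · have eA : beads lam \ beads xi = {r'} := by
            rw [hXc]; exact (diff_sets_one hr'B specm1.2.2.1).1
          have eS : beads xi \ beads lam = {q'} := by
            rw [hXc]; exact (diff_sets_one hr'B specm1.2.2.1).2
          have er : r' = r := singleton_eq_singleton (eA.symm.trans hd1)
          have eq' : q' = q := singleton_eq_singleton (eS.symm.trans hd2)
          have ep' : p' = s := by omega
          have hbe : beads muh = beads mu := by
            rw [specm1.2.2.2, hM, ep', eq']
          exact hne (beads_inj hbe)
        · have eA : beads lam \ beads xi = {p', r'} := by
            rw [hXc]
            exact (diff_sets_two specm1.2.1 hr'B specm1.2.2.1 hs'B hp'r' hq's').1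
          have := pair_eq_singleton (eA.symm.trans hd1)
          omega
      · -- III-b : branch 2 holds
        obtain ⟨muh, specm1⟩ := moveSpec_exists_diagram hrB htB hrt
        obtain ⟨hRm1, cardm1, hgtm1⟩ := spec_props specm1
        have hW : beads muh = insert t (beads lam \ {r}) := specm1.2.2.2
        have specm2 : MoveSpec muh xi t q := by
          refine ⟨htq, ?_, ?_, ?_⟩
          · rw [hW]; exact Or.inl rfl
          · rw [hW]
            rintro (h | ⟨h, -⟩)
            · omega
            · exact hqB h
          · rw [hXf, hW, Set.insert_diff_self_of_notMem (by rintro ⟨h, -⟩; exact htB h)]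
        obtain ⟨hRm2, cardm2, hgtm2⟩ := spec_props specm2
        rw [hW] at hgtm2
        have hne : muh ≠ mu := by
          intro hc
          have hbe : beads muh = beads mu := by rw [hc]
          rw [hW, hM] at hbe
          have hqmem : q ∈ insert q (beads lam \ {s}) := Or.inl rfl
          rw [← hbe] at hqmem
          rcases hqmem with h | ⟨h, -⟩
          · omega
          · exact hqB h
        have eW : nb (insert t (beads lam \ {r})) t q
            = nb (beads lam \ {r}) t q + (if t ∈ Set.Ioo t q then 1 else 0) :=
          nb_insert (by rintro ⟨h, -⟩; exact htB h)
        have eB2 : nb (beads lam) t q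
            = nb (beads lam \ {r}) t q + (if r ∈ Set.Ioo t q then 1 else 0) := nb_diff hrB
        have et0 : (if t ∈ beads lam then 1 else 0) = 0 := if_neg htB
        have hsig : skewSign lam muh * skewSign muh xi
            = -(skewSign lam mu * skewSign mu xi) := by
          unfold skewSign
          rw [hgtm1, hgtm2, hgt1, hgt2]
          exact sign_neg_of_parity (by omega)
        refine Or.inr ⟨⟨muh, hne, hRm1.1, hRm2.1, hRm1, hRm2, by omega, by omega, hsig⟩, ?_⟩
        rintro ⟨nu, -, -, hRn1, hRn2, hcard1, hcard2, -⟩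
        obtain ⟨p', q', specn1⟩ := isRibbon_moveSpec hRn1
        obtain ⟨r', s', specn2⟩ := isRibbon_moveSpec hRn2
        obtain ⟨-, cardn1, -⟩ := spec_props specn1
        obtain ⟨-, cardn2, -⟩ := spec_props specn2
        have hsz1 : q' - p' = s - r := by omega
        have hsz2 : s' - r' = q - s := by omega
        have hd1 : beads lam \ beads xi = {r} := by
          rw [hXf]; exact (diff_sets_one hrB hqB).1
        have hd2 : beads xi \ beads lam = {q} := by
          rw [hXf]; exact (diff_sets_one hrB hqB).2
        rcases candidate_cases specn1 specn2 with
          ⟨-, hs'B, hXc⟩ | ⟨hs'p', hr'B, hXc⟩ | ⟨-, -, hr'B, hs'B, hp'r', hq's', hXc⟩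
        · have eA : beads lam \ beads xi = {p'} := by
            rw [hXc]; exact (diff_sets_one specn1.2.1 hs'B).1
          have ep : p' = r := singleton_eq_singleton (eA.symm.trans hd1)
          have : q' = s := by omega
          exact specn1.2.2.1 (this ▸ hpB)
        · have eA : beads lam \ beads xi = {r'} := by
            rw [hXc]; exact (diff_sets_one hr'B specn1.2.2.1).1
          have eS : beads xi \ beads lam = {q'} := by
            rw [hXc]; exact (diff_sets_one hr'B specn1.2.2.1).2
          have er : r' = r := singleton_eq_singleton (eA.symm.trans hd1)
          have ep' : p' = t := by omega
          exact htB (ep' ▸ specn1.2.1)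
        · have eA : beads lam \ beads xi = {p', r'} := by
            rw [hXc]
            exact (diff_sets_two specn1.2.1 hr'B specn1.2.2.1 hs'B hp'r' hq's').1
          have := pair_eq_singleton (eA.symm.trans hd1)
          omega
    · -- CASE I
      have hrB : r ∈ beads lam := by
        rcases Set.mem_insert_iff.1 hrM with h | h
        · exact absurd h hrq
        · exact h.1
      have hsB : s ∉ beads lam := by
        intro hc
        exact hsM (Or.inr ⟨hc, hsp⟩)
      have hqs : q ≠ s := Ne.symm hsq
      have hpr : p ≠ r := Ne.symm hrp
      -- construct nu
      obtain ⟨nu, specn1⟩ := moveSpec_exists_diagram hrB hsB hrs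
      obtain ⟨hRn1, cardn1, hgtn1⟩ := spec_props specn1
      have hV : beads nu = insert s (beads lam \ {r}) := specn1.2.2.2
      have specn2 : MoveSpec nu xi p q := by
        refine ⟨hpq, ?_, ?_, ?_⟩
        · rw [hV]
          exact Or.inr ⟨hpB, hpr⟩
        · rw [hV]
          rintro (h | ⟨h, -⟩)
          · exact hqs h
          · exact hqB h
        · rw [hX, hV]
          exact insert_diff_comm hpB hrB hqB hsB hpr
      obtain ⟨hRn2, cardn2, hgtn2⟩ := spec_props specn2
      rw [hV] at hgtn2
      -- sign equality for nu
      have eM : nb (insert q (beads lam \ {p})) r s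
          = nb (beads lam \ {p}) r s + (if q ∈ Set.Ioo r s then 1 else 0) :=
        nb_insert (by rintro ⟨h, -⟩; exact hqB h)
      have eB : nb (beads lam) r s
          = nb (beads lam \ {p}) r s + (if p ∈ Set.Ioo r s then 1 else 0) := nb_diff hpB
      have eV : nb (insert s (beads lam \ {r})) p q
          = nb (beads lam \ {r}) p q + (if s ∈ Set.Ioo p q then 1 else 0) :=
        nb_insert (by rintro ⟨h, -⟩; exact hsB h)
      have eB2 : nb (beads lam) p q
          = nb (beads lam \ {r}) p q + (if r ∈ Set.Ioo p q then 1 else 0) := nb_diff hrB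
      have cross := crossing_parity hpq hrs hpr (Ne.symm hsp) (Ne.symm hrq) hqs
      have hsigNu : skewSign lam nu * skewSign nu xi
          = skewSign lam mu * skewSign mu xi := by
        unfold skewSign
        rw [hgtn1, hgtn2, hgt1, hgt2]
        exact sign_eq_of_parity (by omega)
      have hA : ∃ nu : YoungDiagram, lam ≤ nu ∧ nu ≤ xi ∧
          IsRibbon lam nu ∧ IsRibbon nu xi ∧
          (skewCells lam nu).card = (skewCells mu xi).card ∧
          (skewCells nu xi).card = (skewCells lam mu).card ∧
          skewSign lam nu * skewSign nu xi = skewSign lam mu * skewSign mu xi :=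
        ⟨nu, hRn1.1, hRn2.1, hRn1, hRn2, by omega, by omega, hsigNu⟩
      refine Or.inl ⟨hA, ?_⟩
      rintro ⟨muh, hne, -, -, hRm1, hRm2, hcard1, hcard2, hsg⟩
      obtain ⟨p', q', specm1⟩ := isRibbon_moveSpec hRm1
      obtain ⟨r', s', specm2⟩ := isRibbon_moveSpec hRm2
      obtain ⟨-, cardm1, -⟩ := spec_props specm1
      obtain ⟨-, cardm2, -⟩ := spec_props specm2
      have hsz1 : q' - p' = q - p := by omega
      have hsz2 : s' - r' = s - r := by omega
      have hd1 : beads lam \ beads xi = {p, r} := by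
        rw [hX]
        exact (diff_sets_two hpB hrB hqB hsB hpr hqs).1
      have hd2 : beads xi \ beads lam = {q, s} := by
        rw [hX]
        exact (diff_sets_two hpB hrB hqB hsB hpr hqs).2
      have hM' : beads muh = insert q' (beads lam \ {p'}) := specm1.2.2.2
      rcases candidate_cases specm1 specm2 with
        ⟨-, hs'B, hXc⟩ | ⟨hs'p', hr'B, hXc⟩ | ⟨-, -, hr'B, hs'B, hp'r', hq's', hXc⟩
      · have : ({p, r} : Set ℤ) = {p'} := by
          rw [← hd1, hXc]
          exact (diff_sets_one specm1.2.1 hs'B).1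
        have := pair_eq_singleton this
        omega
      · have : ({q, s} : Set ℤ) = {q'} := by
          rw [← hd2, hXc]
          exact (diff_sets_one hr'B specm1.2.2.1).2
        have := pair_eq_singleton this
        omega
      · have he1 : ({p', r'} : Set ℤ) = {p, r} := by
          rw [← hd1, hXc]
          exact (diff_sets_two specm1.2.1 hr'B specm1.2.2.1 hs'B hp'r' hq's').1.symm
        have he2 : ({q', s'} : Set ℤ) = {q, s} := by
          rw [← hd2, hXc]
          exact (diff_sets_two specm1.2.1 hr'B specm1.2.2.1 hs'B hp'r' hq's').2.symm
        obtain ⟨e1, e2, -, -⟩ := pair_eq_pair he1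
        obtain ⟨e3, e4, -, -⟩ := pair_eq_pair he2
        rcases e1 with e1 | e1
        · -- p' = p hence r' = r, q' = q, s' = s, muh = mu
          have hr'r : r' = r := by omega
          have hq'q : q' = q := by omega
          have hmuh : beads muh = beads mu := by
            rw [hM', hM, e1, hq'q]
          exact hne (beads_inj hmuh)
        · -- p' = r, r' = p, q' = s (since q' = q forces r = p), muh = nu
          have hr'p : r' = p := by omega
          have hq' : q' = s := by
            rcases e3 with e3 | e3
            · omega
            · exact e3
          have hmuh : beads muh = beads nu := by
            rw [hM', hV, e1, hq']
          have : muh = nu := beads_inj hmuh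
          subst this
          rw [hsigNu] at hsg
          have hnz := mul_ne_zero (skewSign_ne_zero lam mu) (skewSign_ne_zero mu xi)
          omega

end
end
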